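/- arXiv:2507.10965 — 5 statements merged into one kernel-verified Lean document; each statement's English description precedes it below -/
import Mathlib

section
/- For every integer d ≥ 2 and every natural number n, the number of partitions of n having no part divisible by d equals the number of partitions of n in which every part size occurs at most d − 1 times. -/
namespace GlaisherAux

variable {d : ℕ}

lemma pow_mul_div (d i : ℕ) : d ^ d.maxPowDiv i * (i / d ^ d.maxPowDiv i) = i :=
  Nat.mul_div_cancel' (Nat.maxPowDiv.pow_dvd (p := d) (n := i))

lemma not_dvd_div (hd : 1 < d) {i : ℕ} (hi : 0 < i) :
    ¬ d ∣ (i / d ^ d.maxPowDiv i) := by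
  rintro ⟨c, hc⟩
  have h1 : d ^ (d.maxPowDiv i + 1) ∣ i := by
    refine ⟨c, ?_⟩
    rw [pow_succ, mul_assoc, ← hc, pow_mul_div]
  have : d.maxPowDiv i + 1 ≤ d.maxPowDiv i := (Nat.pow_dvd_iff_le_padicValNat (by omega : d ≠ 1) (by omega : i ≠ 0)).mp h1
  omega

lemma div_pos' (hd : 1 < d) {i : ℕ} (hi : 0 < i) : 0 < i / d ^ d.maxPowDiv i := by
  rcases Nat.eq_zero_or_pos (i / d ^ d.maxPowDiv i) with h | h
  · have := pow_mul_div d i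
    rw [h, mul_zero] at this
    omega
  · exact h

lemma maxPowDiv_pow_mul (hd : 1 < d) {j : ℕ} (hj : 0 < j) (hdj : ¬ d ∣ j) (k : ℕ) :
    d.maxPowDiv (j * d ^ k) = k := by
  have h0 : d.maxPowDiv j = 0 := by
    by_contra h
    exact hdj (dvd_trans (dvd_pow_self d h) (Nat.maxPowDiv.pow_dvd (p := d) (n := j)))
  rw [show d.maxPowDiv (j * d ^ k) = padicValNat d (j * d ^ k) from rfl, mul_comm,
    Nat.maxPowDiv.base_pow_mul hd (by omega : j ≠ 0), show padicValNat d j = 0 from h0, zero_add]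

lemma div_pow_mul (hd : 1 < d) {j : ℕ} (hj : 0 < j) (hdj : ¬ d ∣ j) (k : ℕ) :
    (j * d ^ k) / d ^ d.maxPowDiv (j * d ^ k) = j := by
  rw [maxPowDiv_pow_mul hd hj hdj k, Nat.mul_div_cancel _ (pow_pos (by omega) k)]

lemma maxPowDiv_lt (hd : 1 < d) {i : ℕ} (hi : 0 < i) : d.maxPowDiv i < i := by
  have h1 : d ^ d.maxPowDiv i ≤ i := Nat.le_of_dvd hi (Nat.maxPowDiv.pow_dvd (p := d) (n := i))
  have h2 : d.maxPowDiv i < 2 ^ d.maxPowDiv i := Nat.lt_two_pow_self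
  have h3 : 2 ^ d.maxPowDiv i ≤ d ^ d.maxPowDiv i := Nat.pow_le_pow_left hd _
  omega

/-- The Glaisher map. -/
def psi (d : ℕ) (lam : Multiset ℕ) : Multiset ℕ :=
  lam.bind fun i => Multiset.replicate (d ^ d.maxPowDiv i) (i / d ^ d.maxPowDiv i)

@[simp] lemma psi_zero : psi d 0 = 0 := rfl

lemma psi_cons (i : ℕ) (s : Multiset ℕ) :
    psi d (i ::ₘ s) = Multiset.replicate (d ^ d.maxPowDiv i) (i / d ^ d.maxPowDiv i) + psi d s :=
  Multiset.cons_bind _ _ _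

lemma psi_add (s t : Multiset ℕ) : psi d (s + t) = psi d s + psi d t :=
  Multiset.add_bind _ _ _

lemma psi_sum_eq (lam : Multiset ℕ) : (psi d lam).sum = lam.sum := by
  induction lam using Multiset.induction_on with
  | empty => simp
  | cons i s ih =>
    rw [psi_cons, Multiset.sum_add, Multiset.sum_cons, ih, Multiset.sum_replicate,
      smul_eq_mul, pow_mul_div]

lemma mem_psi (hd : 1 < d) {x : ℕ} {lam : Multiset ℕ} :
    x ∈ psi d lam ↔ ∃ i ∈ lam, x = i / d ^ d.maxPowDiv i := by
  simp only [psi, Multiset.mem_bind, Multiset.mem_replicate]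
  constructor
  · rintro ⟨i, hi, -, rfl⟩; exact ⟨i, hi, rfl⟩
  · rintro ⟨i, hi, rfl⟩
    exact ⟨i, hi, by positivity, rfl⟩

lemma psi_replicate (c x : ℕ) :
    psi d (Multiset.replicate c x) =
      Multiset.replicate (c * d ^ d.maxPowDiv x) (x / d ^ d.maxPowDiv x) := by
  induction c with
  | zero => simp
  | succ c ih =>
    rw [Multiset.replicate_succ, psi_cons, ih, Nat.succ_mul, Multiset.replicate_add]
    rw [add_comm]


lemma count_psi (hd : 1 < d) {j : ℕ} (hj : 0 < j) (hdj : ¬ d ∣ j) (N : ℕ) (lam : Multiset ℕ) :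
    (∀ i ∈ lam, 0 < i) → (∀ i ∈ lam, d.maxPowDiv i < N) →
    (psi d lam).count j = ∑ k ∈ Finset.range N, d ^ k * lam.count (j * d ^ k) := by
  induction lam using Multiset.induction_on with
  | empty => simp
  | cons i s ih =>
    intro hpos hN
    have hi : 0 < i := hpos i (Multiset.mem_cons_self i s)
    have hiN : d.maxPowDiv i < N := hN i (Multiset.mem_cons_self i s)
    have hrec := ih (fun x hx => hpos x (Multiset.mem_cons_of_mem hx))
      (fun x hx => hN x (Multiset.mem_cons_of_mem hx))
    rw [psi_cons, Multiset.count_add, Multiset.count_replicate, hrec]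
    simp only [Multiset.count_cons, mul_add, Finset.sum_add_distrib]
    have key : (if i / d ^ d.maxPowDiv i = j then d ^ d.maxPowDiv i else 0)
        = ∑ k ∈ Finset.range N, d ^ k * (if j * d ^ k = i then 1 else 0) := by
      by_cases hqi : i / d ^ d.maxPowDiv i = j
      · rw [if_pos hqi]
        rw [Finset.sum_eq_single_of_mem (d.maxPowDiv i) (Finset.mem_range.mpr hiN)]
        · have : j * d ^ d.maxPowDiv i = i := by
            rw [← hqi, mul_comm, pow_mul_div]
          rw [if_pos this, mul_one]
        · intro k _ hk
          have : j * d ^ k ≠ i := by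
            intro h
            have := maxPowDiv_pow_mul hd hj hdj k
            rw [h] at this
            omega
          rw [if_neg this, mul_zero]
      · rw [if_neg hqi]
        symm
        apply Finset.sum_eq_zero
        intro k _
        have : j * d ^ k ≠ i := by
          intro h
          apply hqi
          rw [← h, div_pow_mul hd hj hdj k]
        rw [if_neg this, mul_zero]
    omega


/-- Put `L k`-many copies of `j * d ^ k` (digits little-endian starting at position `k`). -/
def rep (d j : ℕ) : List ℕ → ℕ → Multiset ℕ
  | [], _ => 0
  | c :: L, k => Multiset.replicate c (j * d ^ k) + rep d j L (k + 1)

lemma psi_rep (hd : 1 < d) {j : ℕ} (hj : 0 < j) (hdj : ¬ d ∣ j) :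
    ∀ (L : List ℕ) (k : ℕ),
      psi d (rep d j L k) = Multiset.replicate (Nat.ofDigits d L * d ^ k) j := by
  intro L
  induction L with
  | nil => intro k; simp [rep, Nat.ofDigits_nil]
  | cons c L ih =>
    intro k
    rw [rep, psi_add, psi_replicate, ih (k + 1),
      maxPowDiv_pow_mul hd hj hdj k,
      Nat.mul_div_cancel _ (pow_pos (by omega : 0 < d) k),
      ← Multiset.replicate_add]
    congr 1
    rw [Nat.ofDigits_cons]
    ring

lemma mem_rep {j x : ℕ} : ∀ {L : List ℕ} {k : ℕ}, x ∈ rep d j L k → ∃ m, k ≤ m ∧ x = j * d ^ m := by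
  intro L
  induction L with
  | nil => intro k h; simp [rep] at h
  | cons c L ih =>
    intro k h
    rw [rep, Multiset.mem_add] at h
    rcases h with h | h
    · exact ⟨k, le_refl k, (Multiset.eq_of_mem_replicate h)⟩
    · obtain ⟨m, hm, hx⟩ := ih h
      exact ⟨m, by omega, hx⟩

lemma count_rep_eq_zero {j i : ℕ} {L : List ℕ} {k : ℕ}
    (h : ∀ m, k ≤ m → i ≠ j * d ^ m) : (rep d j L k).count i = 0 := by
  rw [Multiset.count_eq_zero]
  intro hmem
  obtain ⟨m, hm, hx⟩ := mem_rep hmem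
  exact h m hm hx

lemma count_rep_lt (hd : 1 < d) {j : ℕ} (hj : 0 < j) :
    ∀ (L : List ℕ) (k : ℕ), (∀ c ∈ L, c < d) → ∀ i, (rep d j L k).count i < d := by
  intro L
  induction L with
  | nil => intro k _ i; simp [rep]; omega
  | cons c L ih =>
    intro k hL i
    rw [rep, Multiset.count_add, Multiset.count_replicate]
    by_cases hi : j * d ^ k = i
    · have ht : (rep d j L (k + 1)).count i = 0 := by
        apply count_rep_eq_zero
        intro m hm he
        rw [← hi] at he
        have : d ^ k = d ^ m := Nat.eq_of_mul_eq_mul_left hj he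
        have := Nat.pow_right_injective (by omega : 2 ≤ d) this
        omega
      rw [ht, if_pos hi]
      have := hL c List.mem_cons_self
      omega
    · rw [if_neg hi, zero_add]
      exact ih (k + 1) (fun c hc => hL c (List.mem_cons_of_mem _ hc)) i

lemma count_rep_ne_zero (hd : 1 < d) {j i : ℕ} (hj : 0 < j) (hdj : ¬ d ∣ j)
    {L : List ℕ} {k : ℕ} (h : (rep d j L k).count i ≠ 0) :
    i / d ^ d.maxPowDiv i = j := by
  have h' : i ∈ rep d j L k := by
    rw [← Multiset.count_pos]; omega
  obtain ⟨m, _, rfl⟩ := mem_rep h'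
  exact div_pow_mul hd hj hdj m


lemma digit_unique (hd : 1 < d) : ∀ (N : ℕ) (a b : ℕ → ℕ), (∀ k, a k < d) → (∀ k, b k < d) →
    (∑ k ∈ Finset.range N, d ^ k * a k) = (∑ k ∈ Finset.range N, d ^ k * b k) →
    ∀ k < N, a k = b k := by
  intro N
  induction N with
  | zero => intro a b _ _ _ k hk; omega
  | succ N ih =>
    intro a b ha hb hsum k hk
    simp only [Finset.sum_range_succ', pow_zero, one_mul, pow_succ] at hsum
    have ea : ∀ c : ℕ → ℕ, ∑ i ∈ Finset.range N, d ^ i * d * c (i + 1)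
        = d * ∑ i ∈ Finset.range N, d ^ i * c (i + 1) := by
      intro c; rw [Finset.mul_sum]; apply Finset.sum_congr rfl; intro i _; ring
    rw [ea a, ea b] at hsum
    set Sa := ∑ i ∈ Finset.range N, d ^ i * a (i + 1) with hSa
    set Sb := ∑ i ∈ Finset.range N, d ^ i * b (i + 1) with hSb
    have h0 : a 0 = b 0 := by
      have h1 : (d * Sa + a 0) % d = (d * Sb + b 0) % d := by rw [hsum]
      rwa [Nat.mul_add_mod, Nat.mul_add_mod, Nat.mod_eq_of_lt (ha 0),
        Nat.mod_eq_of_lt (hb 0)] at h1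
    have hS : Sa = Sb := by
      have h2 : d * Sa = d * Sb := by omega
      exact Nat.eq_of_mul_eq_mul_left (by omega) h2
    cases k with
    | zero => exact h0
    | succ k' =>
      exact ih (fun m => a (m + 1)) (fun m => b (m + 1)) (fun m => ha _) (fun m => hb _)
        hS k' (by omega)

lemma B_to_A (hd : 1 < d) {n : ℕ} (lam : Multiset ℕ)
    (h : (∀ i ∈ lam, 0 < i) ∧ (∀ i, lam.count i ≤ d - 1) ∧ lam.sum = n) :
    (∀ i ∈ psi d lam, 0 < i) ∧ (∀ i ∈ psi d lam, ¬ d ∣ i) ∧ (psi d lam).sum = n := by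
  obtain ⟨h1, _, h3⟩ := h
  refine ⟨?_, ?_, by rw [psi_sum_eq, h3]⟩
  · intro x hx
    obtain ⟨i, hi, rfl⟩ := (mem_psi hd).1 hx
    exact div_pos' hd (h1 i hi)
  · intro x hx
    obtain ⟨i, hi, rfl⟩ := (mem_psi hd).1 hx
    exact not_dvd_div hd (h1 i hi)

lemma psi_inj (hd : 1 < d) {n : ℕ} {lam1 lam2 : Multiset ℕ}
    (h1p : ∀ i ∈ lam1, 0 < i) (h1c : ∀ i, lam1.count i ≤ d - 1) (h1s : lam1.sum = n)
    (h2p : ∀ i ∈ lam2, 0 < i) (h2c : ∀ i, lam2.count i ≤ d - 1) (h2s : lam2.sum = n)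
    (h : psi d lam1 = psi d lam2) : lam1 = lam2 := by
  ext i
  rcases Nat.eq_zero_or_pos i with rfl | hi
  · rw [Multiset.count_eq_zero_of_notMem (fun hm => lt_irrefl 0 (h1p 0 hm)),
      Multiset.count_eq_zero_of_notMem (fun hm => lt_irrefl 0 (h2p 0 hm))]
  · have hjpos : 0 < i / d ^ d.maxPowDiv i := div_pos' hd hi
    have hjnd : ¬ d ∣ i / d ^ d.maxPowDiv i := not_dvd_div hd hi
    set j := i / d ^ d.maxPowDiv i with hjdef
    set N := n + d.maxPowDiv i + 1 with hN
    have hb : ∀ (lam : Multiset ℕ), (∀ x ∈ lam, 0 < x) → lam.sum = n →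
        ∀ x ∈ lam, d.maxPowDiv x < N := by
      intro lam hp hs x hx
      have hxn : x ≤ n := by
        obtain ⟨t, rfl⟩ := Multiset.exists_cons_of_mem hx
        rw [← hs, Multiset.sum_cons]; omega
      have := maxPowDiv_lt hd (hp x hx)
      omega
    have e1 := count_psi hd hjpos hjnd N lam1 h1p (hb lam1 h1p h1s)
    have e2 := count_psi hd hjpos hjnd N lam2 h2p (hb lam2 h2p h2s)
    rw [h] at e1
    have key := digit_unique hd N (fun k => lam1.count (j * d ^ k))
      (fun k => lam2.count (j * d ^ k))
      (fun k => by show lam1.count (j * d ^ k) < d; have := h1c (j * d ^ k); omega)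
      (fun k => by show lam2.count (j * d ^ k) < d; have := h2c (j * d ^ k); omega)
      (e1.symm.trans e2) (d.maxPowDiv i) (by omega)
    have hji : j * d ^ d.maxPowDiv i = i := by rw [hjdef, mul_comm, pow_mul_div]
    simpa [hji] using key

lemma psi_surj (hd : 1 < d) {n : ℕ} (mu : Multiset ℕ)
    (hp : ∀ i ∈ mu, 0 < i) (hnd : ∀ i ∈ mu, ¬ d ∣ i) (hs : mu.sum = n) :
    ∃ lam : Multiset ℕ, ((∀ i ∈ lam, 0 < i) ∧ (∀ i, lam.count i ≤ d - 1) ∧ lam.sum = n)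
      ∧ psi d lam = mu := by
  classical
  set lam := ∑ j ∈ mu.toFinset, rep d j (Nat.digits d (mu.count j)) 0 with hlam
  have hmem : ∀ x ∈ lam, ∃ j ∈ mu.toFinset, ∃ m, x = j * d ^ m := by
    intro x hx
    rw [hlam, Multiset.mem_sum] at hx
    obtain ⟨j, hj, hxj⟩ := hx
    obtain ⟨m, _, hxm⟩ := mem_rep hxj
    exact ⟨j, hj, m, hxm⟩
  have hpsi : psi d lam = mu := by
    have hsum : psi d (∑ j ∈ mu.toFinset, rep d j (Nat.digits d (mu.count j)) 0)
        = ∑ j ∈ mu.toFinset, psi d (rep d j (Nat.digits d (mu.count j)) 0) :=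
      map_sum ({ toFun := psi d, map_zero' := psi_zero, map_add' := psi_add } :
        Multiset ℕ →+ Multiset ℕ) _ _
    rw [hlam, hsum]
    have hcongr : ∀ j ∈ mu.toFinset,
        psi d (rep d j (Nat.digits d (mu.count j)) 0)
          = mu.count j • ({j} : Multiset ℕ) := by
      intro j hj
      have hjmu : j ∈ mu := Multiset.mem_toFinset.1 hj
      rw [psi_rep hd (hp j hjmu) (hnd j hjmu), pow_zero, mul_one, Nat.ofDigits_digits,
        Multiset.nsmul_singleton]
    rw [Finset.sum_congr rfl hcongr, Multiset.toFinset_sum_count_nsmul_eq]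
  refine ⟨lam, ⟨?_, ?_, ?_⟩, hpsi⟩
  · intro x hx
    obtain ⟨j, hj, m, rfl⟩ := hmem x hx
    have hj0 := hp j (Multiset.mem_toFinset.1 hj)
    positivity
  · intro i
    rw [hlam, Multiset.count_sum']
    have hbound : ∀ j ∈ mu.toFinset,
        (rep d j (Nat.digits d (mu.count j)) 0).count i ≤
          (if j = i / d ^ d.maxPowDiv i then d - 1 else 0) := by
      intro j hj
      have hjmu := Multiset.mem_toFinset.1 hj
      by_cases hji : j = i / d ^ d.maxPowDiv i
      · rw [if_pos hji]
        have := count_rep_lt hd (hp j hjmu) (Nat.digits d (mu.count j)) 0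
          (fun c hc => Nat.digits_lt_base hd hc) i
        omega
      · rw [if_neg hji]
        by_contra hne
        have hne' : (rep d j (Nat.digits d (mu.count j)) 0).count i ≠ 0 := by omega
        exact hji (count_rep_ne_zero hd (hp j hjmu) (hnd j hjmu) hne').symm
    have h1 := Finset.sum_le_sum hbound
    have h2 : ∑ j ∈ mu.toFinset, (if j = i / d ^ d.maxPowDiv i then d - 1 else 0)
        ≤ d - 1 := by
      rw [Finset.sum_ite_eq' mu.toFinset (i / d ^ d.maxPowDiv i) (fun _ => d - 1)]
      split <;> omega
    omega
  · have hse := psi_sum_eq (d := d) lam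
    rw [hpsi, hs] at hse
    omega

end GlaisherAux

/-- Glaisher's theorem: for every integer `d ≥ 2` and every natural number `n`,
the number of partitions of `n` with no part divisible by `d` equals the number of
partitions of `n` in which every part size occurs at most `d - 1` times.
Partitions of `n` are encoded as multisets of positive integers with sum `n`. -/
theorem glaisher (d : ℕ) (hd : 2 ≤ d) (n : ℕ) :
    Nat.card {lam : Multiset ℕ //
      (∀ i ∈ lam, 0 < i) ∧ (∀ i ∈ lam, ¬ d ∣ i) ∧ lam.sum = n} =
    Nat.card {lam : Multiset ℕ //
      (∀ i ∈ lam, 0 < i) ∧ (∀ i, lam.count i ≤ d - 1) ∧ lam.sum = n} := by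
  have hd1 : 1 < d := by omega
  refine (Nat.card_eq_of_bijective
    (fun x => ⟨GlaisherAux.psi d x.1, GlaisherAux.B_to_A hd1 x.1 x.2⟩) ⟨?_, ?_⟩).symm
  · rintro ⟨lam1, h1p, h1c, h1s⟩ ⟨lam2, h2p, h2c, h2s⟩ h
    have h' : GlaisherAux.psi d lam1 = GlaisherAux.psi d lam2 := congrArg Subtype.val h
    exact Subtype.ext (GlaisherAux.psi_inj hd1 h1p h1c h1s h2p h2c h2s h')
  · rintro ⟨mu, hp, hnd, hs⟩
    obtain ⟨lam, hc, hpsi⟩ := GlaisherAux.psi_surj hd1 mu hp hnd hs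
    exact ⟨⟨lam, hc⟩, Subtype.ext hpsi⟩
end

section
/- For every natural number n and every integer s, the number of pairs (μ, ν) of partitions into distinct odd parts with |μ| + |ν| = n and ℓ(μ) − ℓ(ν) = s equals the number of partitions of n − s² into even parts; in particular this count is 0 when s² > n. -/
namespace JTP


/-- `hl A` is `0` if `A` is empty, and `a+1` if `A` has head `a`. -/
def hl : List ℕ → ℕ
  | [] => 0
  | a :: _ => a + 1

/-- Build a partition (as a multiset) from Frobenius coordinates given as
strictly decreasing lists of equal length. -/
def build : List ℕ → List ℕ → Multiset ℕ
  | a :: A, b :: B => (a+1) ::ₘ ((build A B).map (· + 1) + Multiset.replicate (b - hl B) 1)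
  | _, _ => 0

theorem build_nil : build [] [] = 0 := rfl

@[simp] theorem hl_nil : hl [] = 0 := rfl
@[simp] theorem hl_cons (a : ℕ) (A : List ℕ) : hl (a :: A) = a + 1 := rfl

theorem build_cons (a b : ℕ) (A B : List ℕ) :
    build (a :: A) (b :: B) =
      (a+1) ::ₘ ((build A B).map (· + 1) + Multiset.replicate (b - hl B) 1) := rfl

/-- Validity predicate for Frobenius coordinate pairs. -/
def Ok (A B : List ℕ) : Prop :=
  A.Pairwise (· > ·) ∧ B.Pairwise (· > ·) ∧ A.length = B.length

theorem pos_build : ∀ A B, ∀ x ∈ build A B, 0 < x := by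
  intro A
  induction A with
  | nil => intro B x hx; simp [build] at hx
  | cons a A ih =>
    intro B x hx
    cases B with
    | nil => simp [build] at hx
    | cons b B =>
      rw [build_cons] at hx
      rcases Multiset.mem_cons.1 hx with h | h
      · omega
      · rcases Multiset.mem_add.1 h with h | h
        · rcases Multiset.mem_map.1 h with ⟨y, _, rfl⟩; omega
        · rw [Multiset.eq_of_mem_replicate h]; omega

theorem card_build : ∀ A B, Ok A B → Multiset.card (build A B) = hl B := by
  intro A
  induction A with
  | nil =>
    rintro B ⟨-, -, hlen⟩
    have : B = [] := List.length_eq_zero_iff.1 (by simpa using hlen.symm)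
    subst this; rfl
  | cons a A ih =>
    rintro B ⟨hA, hB, hlen⟩
    cases B with
    | nil => simp at hlen
    | cons b B =>
      have hok : Ok A B := ⟨hA.of_cons, hB.of_cons, by simpa using hlen⟩
      have hble : hl B ≤ b := by
        cases B with
        | nil => simp only [hl_nil]; omega
        | cons b' B' =>
          have : b' < b := List.rel_of_pairwise_cons hB (by simp)
          simp only [hl_cons]; omega
      rw [build_cons]
      simp only [Multiset.card_cons, Multiset.card_add, Multiset.card_map,
        Multiset.card_replicate, ih B hok, hl_cons]
      omega

theorem sum_build : ∀ A B, Ok A B → (build A B).sum = A.sum + B.sum + A.length := by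
  intro A
  induction A with
  | nil =>
    rintro B ⟨-, -, hlen⟩
    have : B = [] := List.length_eq_zero_iff.1 (by simpa using hlen.symm)
    subst this; rfl
  | cons a A ih =>
    rintro B ⟨hA, hB, hlen⟩
    cases B with
    | nil => simp at hlen
    | cons b B =>
      have hok : Ok A B := ⟨hA.of_cons, hB.of_cons, by simpa using hlen⟩
      have hble : hl B ≤ b := by
        cases B with
        | nil => simp only [hl_nil]; omega
        | cons b' B' =>
          have : b' < b := List.rel_of_pairwise_cons hB (by simp)
          simp only [hl_cons]; omega
      rw [build_cons]
      have hcard := card_build A B hok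
      have hsum := ih B hok
      have hmapsum : ((build A B).map (· + 1)).sum
          = (build A B).sum + Multiset.card (build A B) := by
        simp [Multiset.sum_map_add]
      simp [Multiset.sum_cons, Multiset.sum_add, hmapsum, hsum, hcard,
        Multiset.sum_replicate, List.sum_cons, smul_eq_mul]
      omega

theorem mem_build_le : ∀ A B, Ok A B → ∀ x ∈ build A B, x ≤ hl A := by
  intro A
  induction A with
  | nil =>
    rintro B ⟨-, -, hlen⟩
    have : B = [] := List.length_eq_zero_iff.1 (by simpa using hlen.symm)
    subst this; intro x hx; simp [build] at hx
  | cons a A ih =>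
    rintro B ⟨hA, hB, hlen⟩
    cases B with
    | nil => simp at hlen
    | cons b B =>
      have hok : Ok A B := ⟨hA.of_cons, hB.of_cons, by simpa using hlen⟩
      have hhla : hl A ≤ a := by
        cases A with
        | nil => simp only [hl_nil]; omega
        | cons a' A' =>
          have : a' < a := List.rel_of_pairwise_cons hA (by simp)
          simp only [hl_cons]; omega
      intro x hx
      rw [build_cons] at hx
      rcases Multiset.mem_cons.1 hx with h | h
      · simp only [hl_cons]; omega
      · rcases Multiset.mem_add.1 h with h | h
        · rcases Multiset.mem_map.1 h with ⟨y, hy, rfl⟩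
          have := ih B hok y hy
          simp only [hl_cons]; omega
        · rw [Multiset.eq_of_mem_replicate h]; simp only [hl_cons]; omega



theorem build_ne_nil (a b : ℕ) (A B : List ℕ) : build (a :: A) (b :: B) ≠ 0 := by
  rw [build_cons]; simp

theorem head_mem_build (a b : ℕ) (A B : List ℕ) : a + 1 ∈ build (a :: A) (b :: B) := by
  rw [build_cons]; exact Multiset.mem_cons_self _ _

theorem build_inj : ∀ A B A' B', Ok A B → Ok A' B' → build A B = build A' B' →
    A = A' ∧ B = B' := by
  intro A
  induction A with
  | nil =>
    rintro B A' B' ⟨-, -, hlen⟩ ⟨-, -, hlen'⟩ heq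
    have hB : B = [] := List.length_eq_zero_iff.1 (by simpa using hlen.symm)
    subst hB
    cases A' with
    | nil =>
      have hB' : B' = [] := List.length_eq_zero_iff.1 (by simpa using hlen'.symm)
      exact ⟨rfl, hB'.symm⟩
    | cons a' A'' =>
      cases B' with
      | nil => simp at hlen'
      | cons b' B'' =>
        exfalso; exact build_ne_nil a' b' A'' B'' (by rw [← heq, build_nil])
  | cons a A ih =>
    rintro B A' B' hok hok' heq
    obtain ⟨hA, hB, hlen⟩ := hok
    cases B with
    | nil => simp at hlen
    | cons b B =>
      cases A' with
      | nil =>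
        obtain ⟨-, -, hlen'⟩ := hok'
        have hB' : B' = [] := List.length_eq_zero_iff.1 (by simpa using hlen'.symm)
        subst hB'
        exfalso; exact build_ne_nil a b A B (by rw [heq, build_nil])
      | cons a' A' =>
        obtain ⟨hA', hB', hlen'⟩ := hok'
        cases B' with
        | nil => simp at hlen'
        | cons b' B'' =>
          have hokt : Ok A B := ⟨hA.of_cons, hB.of_cons, by simpa using hlen⟩
          have hokt' : Ok A' B'' := ⟨hA'.of_cons, hB'.of_cons, by simpa using hlen'⟩
          -- b = b'
          have hcard : b + 1 = b' + 1 := by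
            have h1 := card_build _ _ (⟨hA, hB, hlen⟩ : Ok (a::A) (b::B))
            have h2 := card_build _ _ (⟨hA', hB', hlen'⟩ : Ok (a'::A') (b'::B''))
            rw [heq] at h1
            rw [h1, hl_cons] at h2
            simpa [hl_cons] using h2
          have hb : b = b' := by omega
          -- a = a'
          have ha : a = a' := by
            have h1 : a + 1 ≤ a' + 1 := by
              have := mem_build_le _ _ (⟨hA', hB', hlen'⟩ : Ok (a'::A') (b'::B''))
                (a+1) (by rw [← heq]; exact head_mem_build a b A B)
              simpa [hl_cons] using this
            have h2 : a' + 1 ≤ a + 1 := by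
              have := mem_build_le _ _ (⟨hA, hB, hlen⟩ : Ok (a::A) (b::B))
                (a'+1) (by rw [heq]; exact head_mem_build a' b' A' B'')
              simpa [hl_cons] using this
            omega
          subst hb; subst ha
          -- cancel the head and split off the 1s
          rw [build_cons, build_cons] at heq
          have heq2 := (Multiset.cons_inj_right (a+1)).1 heq
          have hfilter : ∀ (C D : List ℕ) (r : ℕ),
              (((build C D).map (· + 1) + Multiset.replicate r 1).filter (fun x => 2 ≤ x))
                = (build C D).map (· + 1) := by
            intro C D r
            rw [Multiset.filter_add]
            have h1 : ((build C D).map (· + 1)).filter (fun x => 2 ≤ x)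
                = (build C D).map (· + 1) := by
              apply Multiset.filter_eq_self.2
              intro x hx
              rcases Multiset.mem_map.1 hx with ⟨y, hy, rfl⟩
              have := pos_build C D y hy
              omega
            have h2 : (Multiset.replicate r (1:ℕ)).filter (fun x => 2 ≤ x) = 0 := by
              apply Multiset.filter_eq_nil.2
              intro x hx
              rw [Multiset.eq_of_mem_replicate hx]
              omega
            rw [h1, h2, add_zero]
          have hmaps : (build A B).map (· + 1) = (build A' B'').map (· + 1) := by
            have := congrArg (Multiset.filter (fun x => 2 ≤ x)) heq2
            rwa [hfilter, hfilter] at this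
          have hmu : build A B = build A' B'' :=
            Multiset.map_injective (fun x y h => by omega) hmaps
          obtain ⟨rfl, rfl⟩ := ih B A' B'' hokt hokt' hmu
          exact ⟨rfl, rfl⟩

theorem exists_max (l : Multiset ℕ) (hne : l ≠ 0) : ∃ M ∈ l, ∀ x ∈ l, x ≤ M := by
  have hFne : l.toFinset.Nonempty := by
    rcases Multiset.exists_mem_of_ne_zero hne with ⟨x, hx⟩
    exact ⟨x, Multiset.mem_toFinset.2 hx⟩
  refine ⟨l.toFinset.max' hFne, Multiset.mem_toFinset.1 (l.toFinset.max'_mem hFne), ?_⟩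
  intro x hx
  exact Finset.le_max' _ x (Multiset.mem_toFinset.2 hx)

theorem build_surj : ∀ (c : ℕ) (l : Multiset ℕ), Multiset.card l = c →
    (∀ x ∈ l, 0 < x) → ∃ A B, Ok A B ∧ build A B = l := by
  intro c
  induction c using Nat.strong_induction_on with
  | _ c ih =>
    intro l hc hpos
    rcases eq_or_ne l 0 with rfl | hne
    · exact ⟨[], [], ⟨List.Pairwise.nil, List.Pairwise.nil, rfl⟩, build_nil⟩
    · obtain ⟨M, hM, hMle⟩ := exists_max l hne
      have hM1 : 1 ≤ M := hpos M hM
      set l0 := l.erase M with hl0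
      have hl0card : Multiset.card l0 = Multiset.card l - 1 := by
        rw [hl0, Multiset.card_erase_of_mem hM]; rfl
      have hlcpos : 0 < Multiset.card l := Multiset.card_pos.2 hne
      set mu := (l0.filter (fun x => 2 ≤ x)).map (· - 1) with hmu
      have hmucard : Multiset.card mu ≤ Multiset.card l0 := by
        rw [hmu, Multiset.card_map]
        exact Multiset.card_le_card (Multiset.filter_le _ _)
      have hmupos : ∀ x ∈ mu, 0 < x := by
        intro x hx
        rcases Multiset.mem_map.1 hx with ⟨y, hy, rfl⟩
        have := (Multiset.mem_filter.1 hy).2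
        omega
      obtain ⟨A, B, hok, hbuild⟩ := ih (Multiset.card mu)
        (by omega) mu rfl hmupos
      refine ⟨(M - 1) :: A, (Multiset.card l - 1) :: B, ⟨?_, ?_, ?_⟩, ?_⟩
      · -- sortedness of A side
        apply List.pairwise_cons.2
        refine ⟨?_, hok.1⟩
        intro a' ha'
        have hbound : ∀ z ∈ mu, z + 2 ≤ M + 1 ∧ 2 ≤ M := by
          intro z hz
          rcases Multiset.mem_map.1 hz with ⟨y, hy, rfl⟩
          have hy2 := (Multiset.mem_filter.1 hy).2
          have hyl : y ∈ l := Multiset.mem_of_mem_erase (Multiset.mem_filter.1 hy).1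
          have := hMle y hyl
          omega
        cases A with
        | nil => simp at ha'
        | cons h T =>
          have hB : B ≠ [] := by
            intro hBnil
            have := hok.2.2
            rw [hBnil] at this
            simp at this
          obtain ⟨b0, B0, rfl⟩ := List.exists_cons_of_ne_nil hB
          have hhm : h + 1 ∈ mu := by rw [← hbuild]; exact head_mem_build h b0 T B0
          obtain ⟨hh, hM2⟩ := hbound _ hhm
          rcases List.mem_cons.1 ha' with rfl | ha'
          · omega
          · have : h > a' := List.rel_of_pairwise_cons hok.1 ha'
            omega
      · apply List.pairwise_cons.2
        refine ⟨?_, hok.2.1⟩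
        intro b' hb'
        have hcard : Multiset.card mu = hl B := by
          rw [← hbuild]; exact card_build A B hok
        cases B with
        | nil => simp at hb'
        | cons h T =>
          rw [hl_cons] at hcard
          rcases List.mem_cons.1 hb' with rfl | hb'
          · omega
          · have : h > b' := List.rel_of_pairwise_cons hok.2.1 hb'
            omega
      · simp [hok.2.2]
      · rw [build_cons, hbuild]
        have hcard : Multiset.card mu = hl B := by
          rw [← hbuild]; exact card_build A B hok
        have hmap : mu.map (· + 1) = l0.filter (fun x => 2 ≤ x) := by
          rw [hmu, Multiset.map_map]
          rw [show ((· + 1) ∘ (· - 1) : ℕ → ℕ) = fun x => x - 1 + 1 from rfl]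
          rw [Multiset.map_congr rfl (fun x hx => by
            have := (Multiset.mem_filter.1 hx).2
            omega : ∀ x ∈ l0.filter (fun x => 2 ≤ x), x - 1 + 1 = x)]
          exact Multiset.map_id' _
        have hrep : Multiset.replicate (Multiset.card l - 1 - hl B) 1
            = l0.filter (fun x => ¬ 2 ≤ x) := by
          symm
          apply (Multiset.eq_replicate).2
          constructor
          · have h1 : Multiset.card (l0.filter (fun x => 2 ≤ x))
                + Multiset.card (l0.filter (fun x => ¬ 2 ≤ x)) = Multiset.card l0 := by
              rw [← Multiset.card_add, Multiset.filter_add_not]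
            have h2 : Multiset.card (l0.filter (fun x => 2 ≤ x)) = Multiset.card mu := by
              rw [hmu, Multiset.card_map]
            omega
          · intro x hx
            have h1 := (Multiset.mem_filter.1 hx).2
            have hxl : x ∈ l := Multiset.mem_of_mem_erase (Multiset.mem_filter.1 hx).1
            have := hpos x hxl
            omega
        rw [hmap, hrep, Multiset.filter_add_not]
        rw [show M - 1 + 1 = M by omega]
        exact Multiset.cons_erase hM


/-! ### Types -/

def Cond (n : ℕ) (s : ℤ) (p : Multiset ℕ × Multiset ℕ) : Prop :=
  (∀ i ∈ p.1, Odd i) ∧ p.1.Nodup ∧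
  (∀ i ∈ p.2, Odd i) ∧ p.2.Nodup ∧
  p.1.sum + p.2.sum = n ∧
  (Multiset.card p.1 : ℤ) - (Multiset.card p.2 : ℤ) = s

def Pairs (n : ℕ) (s : ℤ) : Type := {p : Multiset ℕ × Multiset ℕ // Cond n s p}

def Evens (z : ℤ) : Type := {lam : Multiset ℕ //
      (∀ i ∈ lam, 0 < i ∧ Even i) ∧ (lam.sum : ℤ) = z}

def NodupPairs (n : ℕ) : Type := {q : Multiset ℕ × Multiset ℕ //
      q.1.Nodup ∧ q.2.Nodup ∧ Multiset.card q.1 = Multiset.card q.2 ∧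
      2 * (q.1.sum + q.2.sum + Multiset.card q.1) = n}

def SortedPairs (n : ℕ) : Type := {q : List ℕ × List ℕ //
      q.1.Pairwise (· > ·) ∧ q.2.Pairwise (· > ·) ∧ q.1.length = q.2.length ∧
      2 * (q.1.sum + q.2.sum + q.1.length) = n}

def Pos (n : ℕ) : Type := {l : Multiset ℕ // (∀ x ∈ l, 0 < x) ∧ 2 * l.sum = n}

/-! ### Small sum lemmas -/

theorem map_map_id (m : Multiset ℕ) (f g : ℕ → ℕ) (h : ∀ x ∈ m, g (f x) = x) :
    (m.map f).map g = m := by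
  induction m using Multiset.induction_on with
  | empty => simp
  | cons a m ih =>
    simp only [Multiset.map_cons, Multiset.cons_inj_right]
    rw [h a (Multiset.mem_cons_self a m), ih (fun x hx => h x (Multiset.mem_cons_of_mem hx))]

theorem sum_tmo (S : Multiset ℕ) :
    (S.map (fun i => 2 * i + 1)).sum = 2 * S.sum + Multiset.card S := by
  induction S using Multiset.induction_on with
  | empty => simp
  | cons a S ih => simp [ih]; ring

theorem half_odd_map (μ : Multiset ℕ) (hodd : ∀ i ∈ μ, Odd i) :
    (μ.map (· / 2)).map (fun i => 2 * i + 1) = μ :=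
  map_map_id μ _ _ (fun x hx => by obtain ⟨k, hk⟩ := hodd x hx; omega)

theorem tmo_half_map (S : Multiset ℕ) : ((S.map (fun i => 2 * i + 1)).map (· / 2)) = S :=
  map_map_id S _ _ (fun x _ => by omega)

theorem nodup_half (μ : Multiset ℕ) (hodd : ∀ i ∈ μ, Odd i) (hnd : μ.Nodup) :
    (μ.map (· / 2)).Nodup := by
  refine hnd.map_on ?_
  intro x hx y hy hxy
  obtain ⟨k, hk⟩ := hodd x hx
  obtain ⟨m, hm⟩ := hodd y hy
  omega

theorem sum_half_odd (μ : Multiset ℕ) (hodd : ∀ i ∈ μ, Odd i) :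
    2 * (μ.map (· / 2)).sum + Multiset.card μ = μ.sum := by
  conv_rhs => rw [← half_odd_map μ hodd]
  rw [sum_tmo, Multiset.card_map]

/-! ### The chain of equivalences for `s = 0` -/

def e1 (n : ℕ) : Pairs n 0 ≃ NodupPairs n where
  toFun := fun ⟨⟨μ, ν⟩, hp⟩ => ⟨(μ.map (· / 2), ν.map (· / 2)), by
    obtain ⟨h1, h2, h3, h4, h5, h6⟩ := hp
    refine ⟨nodup_half μ h1 h2, nodup_half ν h3 h4, ?_, ?_⟩ <;>
      dsimp only at h5 h6 ⊢
    · simp only [Multiset.card_map]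
      omega
    · have hμ := sum_half_odd μ h1
      have hν := sum_half_odd ν h3
      simp only [Multiset.card_map]
      omega⟩
  invFun := fun ⟨⟨S, T⟩, hq⟩ =>
    ⟨(S.map (fun i => 2 * i + 1), T.map (fun i => 2 * i + 1)), by
    obtain ⟨h1, h2, h3, h4⟩ := hq
    dsimp only at h3 h4
    refine ⟨?_, ?_, ?_, ?_, ?_, ?_⟩ <;> dsimp only
    · rintro i hi
      rcases Multiset.mem_map.1 hi with ⟨y, _, rfl⟩
      exact ⟨y, by ring⟩
    · exact h1.map (fun x y h => by omega)
    · rintro i hi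
      rcases Multiset.mem_map.1 hi with ⟨y, _, rfl⟩
      exact ⟨y, by ring⟩
    · exact h2.map (fun x y h => by omega)
    · rw [sum_tmo, sum_tmo]
      omega
    · simp only [Multiset.card_map]
      omega⟩
  left_inv := by
    rintro ⟨⟨μ, ν⟩, h1, h2, h3, h4, h5, h6⟩
    apply Subtype.ext
    simp only [Prod.mk.injEq]
    exact ⟨half_odd_map μ h1, half_odd_map ν h3⟩
  right_inv := by
    rintro ⟨⟨S, T⟩, h⟩
    apply Subtype.ext
    simp only [Prod.mk.injEq]
    exact ⟨tmo_half_map S, tmo_half_map T⟩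


/-! ### Sorting -/

def sortD (S : Multiset ℕ) : List ℕ := (S.sort (· ≤ ·)).reverse

theorem coe_sortD (S : Multiset ℕ) : ((sortD S : List ℕ) : Multiset ℕ) = S := by
  rw [sortD, ← Multiset.coe_reverse, List.reverse_reverse, Multiset.sort_eq]

theorem sortD_sorted (S : Multiset ℕ) (h : S.Nodup) : (sortD S).Pairwise (· > ·) := by
  have hs : (S.sort (· ≤ ·)).Pairwise (· ≤ ·) := Multiset.pairwise_sort _ _
  have hnd : (S.sort (· ≤ ·)).Nodup := by
    rw [← Multiset.coe_nodup, Multiset.sort_eq]; exact h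
  rw [sortD, List.pairwise_reverse]
  exact (hs.and hnd).imp (fun h => lt_of_le_of_ne h.1 h.2)

theorem sortD_length (S : Multiset ℕ) : (sortD S).length = Multiset.card S := by
  rw [← Multiset.coe_card, coe_sortD]

theorem sortD_sum (S : Multiset ℕ) : (sortD S).sum = S.sum := by
  rw [← Multiset.sum_coe, coe_sortD]

theorem sortD_coe (A : List ℕ) (h : A.Pairwise (· > ·)) : sortD (A : Multiset ℕ) = A := by
  have h1 : List.Pairwise (· > ·) (sortD (A : Multiset ℕ)) :=
    sortD_sorted _ (by rw [Multiset.coe_nodup]; exact h.nodup)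
  have h2 : List.Perm (sortD (A : Multiset ℕ)) A := by
    rw [← Multiset.coe_eq_coe, coe_sortD]
  exact List.Perm.eq_of_pairwise (fun a b _ _ h1 h2 => by omega) h1 h h2

def e2 (n : ℕ) : NodupPairs n ≃ SortedPairs n where
  toFun := fun ⟨⟨S, T⟩, hq⟩ => ⟨(sortD S, sortD T), by
    obtain ⟨h1, h2, h3, h4⟩ := hq
    dsimp only at h3 h4 ⊢
    exact ⟨sortD_sorted S h1, sortD_sorted T h2, by rw [sortD_length, sortD_length, h3],
      by rw [sortD_sum, sortD_sum, sortD_length]; exact h4⟩⟩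
  invFun := fun ⟨⟨A, B⟩, hq⟩ => ⟨((A : Multiset ℕ), (B : Multiset ℕ)), by
    obtain ⟨h1, h2, h3, h4⟩ := hq
    dsimp only at h3 h4 ⊢
    refine ⟨by rw [Multiset.coe_nodup]; exact h1.nodup,
      by rw [Multiset.coe_nodup]; exact h2.nodup, ?_, ?_⟩
    · rw [Multiset.coe_card, Multiset.coe_card]; exact h3
    · rw [Multiset.sum_coe, Multiset.sum_coe, Multiset.coe_card]; exact h4⟩
  left_inv := by
    rintro ⟨⟨S, T⟩, h⟩
    apply Subtype.ext
    simp only [Prod.mk.injEq]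
    exact ⟨coe_sortD S, coe_sortD T⟩
  right_inv := by
    rintro ⟨⟨A, B⟩, h1, h2, h3, h4⟩
    apply Subtype.ext
    simp only [Prod.mk.injEq]
    exact ⟨sortD_coe A h1, sortD_coe B h2⟩

noncomputable def e3 (n : ℕ) : SortedPairs n ≃ Pos n := by
  apply Equiv.ofBijective (f := fun ⟨⟨A, B⟩, hq⟩ =>
    ⟨build A B, pos_build _ _, by
      obtain ⟨h1, h2, h3, h4⟩ := hq
      dsimp only at h4
      rw [sum_build A B ⟨h1, h2, h3⟩]
      exact h4⟩)
  constructor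
  · rintro ⟨⟨A, B⟩, h1, h2, h3, h4⟩ ⟨⟨A', B'⟩, h1', h2', h3', h4'⟩ heq
    have := congrArg Subtype.val heq
    simp only at this
    obtain ⟨rfl, rfl⟩ := build_inj A B A' B' ⟨h1, h2, h3⟩ ⟨h1', h2', h3'⟩ this
    rfl
  · rintro ⟨l, hpos, hsum⟩
    obtain ⟨A, B, hok, hbuild⟩ := build_surj (Multiset.card l) l rfl hpos
    refine ⟨⟨(A, B), hok.1, hok.2.1, hok.2.2, ?_⟩, ?_⟩
    · dsimp only
      rw [← sum_build A B hok, hbuild]; exact hsum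
    · apply Subtype.ext
      exact hbuild

theorem sum_map_double (m : Multiset ℕ) : (m.map (fun i => 2 * i)).sum = 2 * m.sum := by
  induction m using Multiset.induction_on with
  | empty => simp
  | cons a m ih => simp [ih]; ring

def e4 (n : ℕ) : Pos n ≃ Evens (n : ℤ) where
  toFun := fun ⟨l, hl⟩ => ⟨l.map (fun i => 2 * i), by
    obtain ⟨hpos, hsum⟩ := hl
    refine ⟨?_, ?_⟩
    · rintro i hi
      rcases Multiset.mem_map.1 hi with ⟨y, hy, rfl⟩
      exact ⟨by have := hpos y hy; omega, ⟨y, by ring⟩⟩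
    · rw [sum_map_double]
      exact_mod_cast hsum⟩
  invFun := fun ⟨lam, hl⟩ => ⟨lam.map (· / 2), by
    obtain ⟨hpos, hsum⟩ := hl
    refine ⟨?_, ?_⟩
    · rintro x hx
      rcases Multiset.mem_map.1 hx with ⟨y, hy, rfl⟩
      obtain ⟨hy1, k, hk⟩ := hpos y hy
      omega
    · have h2 : lam.sum = n := by exact_mod_cast hsum
      have hdd : (lam.map (· / 2)).map (fun i => 2 * i) = lam :=
        map_map_id lam _ _ (fun x hx => by
          obtain ⟨hx1, k, hk⟩ := hpos x hx; omega)
      have := congrArg Multiset.sum hdd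
      rw [sum_map_double] at this
      omega⟩
  left_inv := by
    rintro ⟨l, hpos, hsum⟩
    apply Subtype.ext
    exact map_map_id l _ _ (fun x _ => by omega)
  right_inv := by
    rintro ⟨lam, hpos, hsum⟩
    apply Subtype.ext
    exact map_map_id lam _ _ (fun x hx => by
      obtain ⟨hx1, k, hk⟩ := hpos x hx; omega)

theorem base (n : ℕ) : Nat.card (Pairs n 0) = Nat.card (Evens (n : ℤ)) :=
  Nat.card_congr (((e1 n).trans (e2 n)).trans ((e3 n).trans (e4 n)))




theorem sum_map_addtwo (m : Multiset ℕ) :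
    (m.map (· + 2)).sum = m.sum + 2 * Multiset.card m := by
  induction m using Multiset.induction_on with
  | empty => simp
  | cons a m ih => simp [ih]; ring

theorem sum_map_subtwo (m : Multiset ℕ) (h : ∀ x ∈ m, 2 ≤ x) :
    (m.map (· - 2)).sum + 2 * Multiset.card m = m.sum := by
  induction m using Multiset.induction_on with
  | empty => simp
  | cons a m ih =>
    have ha := h a (Multiset.mem_cons_self a m)
    have := ih (fun x hx => h x (Multiset.mem_cons_of_mem hx))
    simp only [Multiset.map_cons, Multiset.sum_cons, Multiset.card_cons]
    omega

theorem nodup_addtwo {m : Multiset ℕ} (h : m.Nodup) : (m.map (· + 2)).Nodup :=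
  h.map (fun x y h => by omega)

theorem nodup_subtwo {m : Multiset ℕ} (h : m.Nodup) (h2 : ∀ x ∈ m, 2 ≤ x) :
    (m.map (· - 2)).Nodup :=
  h.map_on (fun x hx y hy hxy => by have := h2 x hx; have := h2 y hy; omega)

theorem odd_sub_two {x : ℕ} (h : Odd x) (h3 : x ≠ 1) : Odd (x - 2) := by
  obtain ⟨k, hk⟩ := h
  exact ⟨k - 1, by omega⟩

theorem odd_add_two {x : ℕ} (h : Odd x) : Odd (x + 2) := by
  obtain ⟨k, hk⟩ := h
  exact ⟨k + 1, by omega⟩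

theorem odd_ne_one_ge {x : ℕ} (h : Odd x) (h1 : x ≠ 1) : 3 ≤ x := by
  obtain ⟨k, hk⟩ := h; omega

theorem mem_erase_one {μ : Multiset ℕ} (hnd : μ.Nodup) (hodd : ∀ i ∈ μ, Odd i) :
    ∀ x ∈ μ.erase 1, Odd x ∧ 3 ≤ x := by
  intro x hx
  have hxm : x ∈ μ := Multiset.mem_of_mem_erase hx
  have hx1 : x ≠ 1 := by
    rintro rfl
    exact hnd.notMem_erase hx
  exact ⟨hodd x hxm, odd_ne_one_ge (hodd x hxm) hx1⟩

/-- Forward map: from difference `s+1` to difference `s`. -/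
def fwd (p : Multiset ℕ × Multiset ℕ) : Multiset ℕ × Multiset ℕ :=
  if 1 ∈ p.1 then ((p.1.erase 1).map (· - 2), p.2.map (· + 2))
  else (p.1.map (· - 2), 1 ::ₘ p.2.map (· + 2))

/-- Backward map: from difference `s` to difference `s+1`. -/
def bwd (p : Multiset ℕ × Multiset ℕ) : Multiset ℕ × Multiset ℕ :=
  if 1 ∈ p.2 then (p.1.map (· + 2), (p.2.erase 1).map (· - 2))
  else (1 ::ₘ p.1.map (· + 2), p.2.map (· - 2))

theorem fwd_cond {t n' : ℕ} {p : Multiset ℕ × Multiset ℕ}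
    (h : Cond (n' + (2 * t + 1)) ((t : ℤ) + 1) p) : Cond n' (t : ℤ) (fwd p) := by
  obtain ⟨c1, c2, c3, c4, c5, c6⟩ := h
  obtain ⟨μ, ν⟩ := p
  dsimp only at c1 c2 c3 c4 c5 c6
  by_cases h : (1 : ℕ) ∈ μ
  · have he := mem_erase_one c2 c1
    have hsum1 : (μ.erase 1).sum + 1 = μ.sum := by
      conv_rhs => rw [← Multiset.cons_erase h]
      rw [Multiset.sum_cons]; omega
    have hcard1 : Multiset.card (μ.erase 1) + 1 = Multiset.card μ := by
      conv_rhs => rw [← Multiset.cons_erase h]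
      rw [Multiset.card_cons]
    have hs1 := sum_map_subtwo (μ.erase 1) (fun x hx => by have := (he x hx).2; omega)
    have hs2 := sum_map_addtwo ν
    rw [fwd, if_pos h]
    refine ⟨?_, ?_, ?_, ?_, ?_, ?_⟩ <;> dsimp only
    · rintro i hi
      rcases Multiset.mem_map.1 hi with ⟨y, hy, rfl⟩
      exact odd_sub_two (he y hy).1 (by have := (he y hy).2; omega)
    · exact nodup_subtwo (c2.erase 1) (fun x hx => by have := (he x hx).2; omega)
    · rintro i hi
      rcases Multiset.mem_map.1 hi with ⟨y, hy, rfl⟩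
      exact odd_add_two (c3 y hy)
    · exact nodup_addtwo c4
    · omega
    · simp only [Multiset.card_map]
      omega
  · have he : ∀ x ∈ μ, Odd x ∧ 3 ≤ x := fun x hx =>
      ⟨c1 x hx, odd_ne_one_ge (c1 x hx) (by rintro rfl; exact h hx)⟩
    have hs1 := sum_map_subtwo μ (fun x hx => by have := (he x hx).2; omega)
    have hs2 := sum_map_addtwo ν
    rw [fwd, if_neg h]
    refine ⟨?_, ?_, ?_, ?_, ?_, ?_⟩ <;> dsimp only
    · rintro i hi
      rcases Multiset.mem_map.1 hi with ⟨y, hy, rfl⟩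
      exact odd_sub_two (he y hy).1 (by have := (he y hy).2; omega)
    · exact nodup_subtwo c2 (fun x hx => by have := (he x hx).2; omega)
    · rintro i hi
      rcases Multiset.mem_cons.1 hi with rfl | hi
      · exact ⟨0, by omega⟩
      · rcases Multiset.mem_map.1 hi with ⟨y, hy, rfl⟩
        exact odd_add_two (c3 y hy)
    · rw [Multiset.nodup_cons]
      refine ⟨?_, nodup_addtwo c4⟩
      intro hc
      rcases Multiset.mem_map.1 hc with ⟨y, _, hy⟩
      omega
    · simp only [Multiset.sum_cons]
      omega
    · simp only [Multiset.card_cons, Multiset.card_map]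
      omega

theorem bwd_cond {t n' : ℕ} {p : Multiset ℕ × Multiset ℕ}
    (h : Cond n' (t : ℤ) p) : Cond (n' + (2 * t + 1)) ((t : ℤ) + 1) (bwd p) := by
  obtain ⟨c1, c2, c3, c4, c5, c6⟩ := h
  obtain ⟨μ, ν⟩ := p
  dsimp only at c1 c2 c3 c4 c5 c6
  by_cases h : (1 : ℕ) ∈ ν
  · have he := mem_erase_one c4 c3
    have hsum1 : (ν.erase 1).sum + 1 = ν.sum := by
      conv_rhs => rw [← Multiset.cons_erase h]
      rw [Multiset.sum_cons]; omega
    have hcard1 : Multiset.card (ν.erase 1) + 1 = Multiset.card ν := by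
      conv_rhs => rw [← Multiset.cons_erase h]
      rw [Multiset.card_cons]
    have hs1 := sum_map_subtwo (ν.erase 1) (fun x hx => by have := (he x hx).2; omega)
    have hs2 := sum_map_addtwo μ
    rw [bwd, if_pos h]
    refine ⟨?_, ?_, ?_, ?_, ?_, ?_⟩ <;> dsimp only
    · rintro i hi
      rcases Multiset.mem_map.1 hi with ⟨y, hy, rfl⟩
      exact odd_add_two (c1 y hy)
    · exact nodup_addtwo c2
    · rintro i hi
      rcases Multiset.mem_map.1 hi with ⟨y, hy, rfl⟩
      exact odd_sub_two (he y hy).1 (by have := (he y hy).2; omega)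
    · exact nodup_subtwo (c4.erase 1) (fun x hx => by have := (he x hx).2; omega)
    · omega
    · simp only [Multiset.card_map]
      omega
  · have he : ∀ x ∈ ν, Odd x ∧ 3 ≤ x := fun x hx =>
      ⟨c3 x hx, odd_ne_one_ge (c3 x hx) (by rintro rfl; exact h hx)⟩
    have hs1 := sum_map_subtwo ν (fun x hx => by have := (he x hx).2; omega)
    have hs2 := sum_map_addtwo μ
    rw [bwd, if_neg h]
    refine ⟨?_, ?_, ?_, ?_, ?_, ?_⟩ <;> dsimp only
    · rintro i hi
      rcases Multiset.mem_cons.1 hi with rfl | hi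
      · exact ⟨0, by omega⟩
      · rcases Multiset.mem_map.1 hi with ⟨y, hy, rfl⟩
        exact odd_add_two (c1 y hy)
    · rw [Multiset.nodup_cons]
      refine ⟨?_, nodup_addtwo c2⟩
      intro hc
      rcases Multiset.mem_map.1 hc with ⟨y, _, hy⟩
      omega
    · rintro i hi
      rcases Multiset.mem_map.1 hi with ⟨y, hy, rfl⟩
      exact odd_sub_two (he y hy).1 (by have := (he y hy).2; omega)
    · exact nodup_subtwo c4 (fun x hx => by have := (he x hx).2; omega)
    · simp only [Multiset.sum_cons]
      omega
    · simp only [Multiset.card_cons, Multiset.card_map]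
      omega


theorem bwd_fwd {p : Multiset ℕ × Multiset ℕ} (hodd1 : ∀ i ∈ p.1, Odd i) (hnd1 : p.1.Nodup)
    (hodd2 : ∀ i ∈ p.2, Odd i) : bwd (fwd p) = p := by
  obtain ⟨μ, ν⟩ := p
  dsimp only at hodd1 hnd1 hodd2
  by_cases h : (1 : ℕ) ∈ μ
  · have he := mem_erase_one hnd1 hodd1
    rw [fwd, if_pos h, bwd, if_neg (by
      intro hc
      rcases Multiset.mem_map.1 hc with ⟨y, _, hy⟩
      omega)]
    dsimp only
    refine Prod.ext ?_ ?_ <;> dsimp only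
    · rw [map_map_id _ _ _ (fun x hx => by have := (he x hx).2; omega)]
      exact Multiset.cons_erase h
    · exact map_map_id _ _ _ (fun x _ => by omega)
  · have he : ∀ x ∈ μ, 3 ≤ x := fun x hx =>
      odd_ne_one_ge (hodd1 x hx) (by rintro rfl; exact h hx)
    rw [fwd, if_neg h, bwd, if_pos (Multiset.mem_cons_self 1 _)]
    dsimp only
    refine Prod.ext ?_ ?_ <;> dsimp only
    · exact map_map_id _ _ _ (fun x hx => by have := he x hx; omega)
    · rw [Multiset.erase_cons_head]
      exact map_map_id _ _ _ (fun x _ => by omega)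

theorem fwd_bwd {p : Multiset ℕ × Multiset ℕ} (hodd2 : ∀ i ∈ p.2, Odd i)
    (hnd2 : p.2.Nodup) : fwd (bwd p) = p := by
  obtain ⟨μ, ν⟩ := p
  dsimp only at hodd2 hnd2
  by_cases h : (1 : ℕ) ∈ ν
  · have he := mem_erase_one hnd2 hodd2
    rw [bwd, if_pos h, fwd, if_neg (by
      intro hc
      rcases Multiset.mem_map.1 hc with ⟨y, _, hy⟩
      omega)]
    dsimp only
    refine Prod.ext ?_ ?_ <;> dsimp only
    · exact map_map_id _ _ _ (fun x _ => by omega)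
    · rw [map_map_id _ _ _ (fun x hx => by have := (he x hx).2; omega)]
      exact Multiset.cons_erase h
  · have he : ∀ x ∈ ν, 3 ≤ x := fun x hx =>
      odd_ne_one_ge (hodd2 x hx) (by rintro rfl; exact h hx)
    rw [bwd, if_neg h, fwd, if_pos (Multiset.mem_cons_self 1 _)]
    dsimp only
    refine Prod.ext ?_ ?_ <;> dsimp only
    · rw [Multiset.erase_cons_head]
      exact map_map_id _ _ _ (fun x _ => by omega)
    · exact map_map_id _ _ _ (fun x hx => by have := he x hx; omega)

def eRec (t n' : ℕ) : Pairs (n' + (2 * t + 1)) ((t : ℤ) + 1) ≃ Pairs n' (t : ℤ) where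
  toFun x := ⟨fwd x.1, fwd_cond x.2⟩
  invFun x := ⟨bwd x.1, bwd_cond x.2⟩
  left_inv := by
    rintro ⟨p, hp⟩
    apply Subtype.ext
    exact bwd_fwd hp.1 hp.2.1 hp.2.2.1
  right_inv := by
    rintro ⟨p, hp⟩
    apply Subtype.ext
    exact fwd_bwd hp.2.2.1 hp.2.2.2.1

/-! ### Lower bound on the weight -/


theorem tri : ∀ (c : ℕ) (S : Multiset ℕ), Multiset.card S = c → S.Nodup →
    Multiset.card S * (Multiset.card S - 1) ≤ 2 * S.sum := by
  intro c
  induction c using Nat.strong_induction_on with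
  | _ c ih =>
    intro S hc hnd
    rcases eq_or_ne S 0 with rfl | hne
    · simp
    · obtain ⟨M, hM, hMle⟩ := exists_max S hne
      set S0 := S.erase M with hS0
      have hcons : S = M ::ₘ S0 := (Multiset.cons_erase hM).symm
      have hnd0 : S0.Nodup := hnd.erase M
      have hcard0 : Multiset.card S0 = Multiset.card S - 1 := by
        rw [hS0, Multiset.card_erase_of_mem hM]; rfl
      have hcpos : 0 < Multiset.card S := Multiset.card_pos.2 hne
      have hMbig : Multiset.card S ≤ M + 1 := by
        have hle : S ≤ Multiset.range (M + 1) := by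
          rw [Multiset.le_iff_subset hnd]
          intro x hx
          rw [Multiset.mem_range]
          exact Nat.lt_succ_of_le (hMle x hx)
        simpa using Multiset.card_le_card hle
      have hIH := ih (Multiset.card S0) (by omega) S0 rfl hnd0
      have hsum : S.sum = M + S0.sum := by rw [hcons, Multiset.sum_cons]
      set k := Multiset.card S with hk
      have hid : k * (k - 1) = (k - 1) * (k - 1 - 1) + 2 * (k - 1) := by
        cases k with
        | zero => rfl
        | succ j =>
          cases j with
          | zero => rfl
          | succ i =>
            simp only [Nat.succ_sub_one]
            ring
      rw [hcard0] at hIH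
      omega

theorem sq_le_sum (μ : Multiset ℕ) (hodd : ∀ i ∈ μ, Odd i) (hnd : μ.Nodup) :
    Multiset.card μ * Multiset.card μ ≤ μ.sum := by
  have h1 := tri (Multiset.card (μ.map (· / 2))) (μ.map (· / 2)) rfl (nodup_half μ hodd hnd)
  have h2 := sum_half_odd μ hodd
  rw [Multiset.card_map] at h1
  have hid : Multiset.card μ * Multiset.card μ
      = Multiset.card μ * (Multiset.card μ - 1) + Multiset.card μ := by
    cases Multiset.card μ with
    | zero => rfl
    | succ j => simp only [Nat.succ_sub_one]; ring
  omega

/-! ### Main induction -/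

theorem main (t : ℕ) : ∀ n : ℕ, Nat.card (Pairs n (t : ℤ)) =
    Nat.card (Evens ((n : ℤ) - (t : ℤ) ^ 2)) := by
  induction t with
  | zero =>
    intro n
    simpa using base n
  | succ t ih =>
    intro n
    by_cases h : n < 2 * t + 1
    · have h1 : IsEmpty (Pairs n ((t + 1 : ℕ) : ℤ)) := by
        constructor
        rintro ⟨⟨μ, ν⟩, c1, c2, c3, c4, c5, c6⟩
        dsimp only at c1 c2 c3 c4 c5 c6
        have hsq := sq_le_sum μ c1 c2
        have hge : t + 1 ≤ Multiset.card μ := by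
          push_cast at c6
          omega
        have := Nat.mul_le_mul hge hge
        have h4 : μ.sum ≤ n := by omega
        nlinarith
      have h2 : IsEmpty (Evens ((n : ℤ) - ((t + 1 : ℕ) : ℤ) ^ 2)) := by
        constructor
        rintro ⟨lam, hc, hs⟩
        have hpos : (0 : ℤ) ≤ (lam.sum : ℤ) := by positivity
        have hsq : ((t + 1 : ℕ) : ℤ) ^ 2 = (t : ℤ) * t + 2 * t + 1 := by
          push_cast; ring
        rw [hsq] at hs
        have hnn : (0:ℤ) ≤ (t : ℤ) * t := by positivity
        omega
      rw [Nat.card_of_isEmpty, Nat.card_of_isEmpty]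
    · have hn : n = (n - (2 * t + 1)) + (2 * t + 1) := by omega
      have e := Nat.card_congr (eRec t (n - (2 * t + 1)))
      rw [← hn] at e
      have harg : ((n - (2 * t + 1) : ℕ) : ℤ) - (t : ℤ) ^ 2
          = (n : ℤ) - ((t : ℤ) + 1) ^ 2 := by
        push_cast [Nat.cast_sub (by omega : 2 * t + 1 ≤ n)]
        ring
      have hcast : ((t + 1 : ℕ) : ℤ) = (t : ℤ) + 1 := by push_cast; ring
      rw [hcast, e, ih, harg]

def eSwap (n : ℕ) (s : ℤ) : Pairs n s ≃ Pairs n (-s) where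
  toFun x := ⟨(x.1.2, x.1.1), by
    obtain ⟨⟨μ, ν⟩, c1, c2, c3, c4, c5, c6⟩ := x
    dsimp only at c1 c2 c3 c4 c5 c6
    refine ⟨c3, c4, c1, c2, ?_, ?_⟩ <;> dsimp only
    · omega
    · omega⟩
  invFun x := ⟨(x.1.2, x.1.1), by
    obtain ⟨⟨μ, ν⟩, c1, c2, c3, c4, c5, c6⟩ := x
    dsimp only at c1 c2 c3 c4 c5 c6
    refine ⟨c3, c4, c1, c2, ?_, ?_⟩ <;> dsimp only
    · omega
    · omega⟩
  left_inv := by rintro ⟨⟨μ, ν⟩, hp⟩; rfl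
  right_inv := by rintro ⟨⟨μ, ν⟩, hp⟩; rfl

theorem final (n : ℕ) (s : ℤ) :
    Nat.card (Pairs n s) = Nat.card (Evens ((n : ℤ) - s ^ 2)) := by
  rcases le_or_gt 0 s with hs | hs
  · obtain ⟨t, rfl⟩ : ∃ t : ℕ, (t : ℤ) = s := ⟨s.toNat, Int.toNat_of_nonneg hs⟩
    exact main t n
  · rw [Nat.card_congr (eSwap n s)]
    obtain ⟨t, ht⟩ : ∃ t : ℕ, (t : ℤ) = -s := ⟨(-s).toNat, Int.toNat_of_nonneg (by omega)⟩
    rw [← ht, main t n, show ((t : ℤ)) ^ 2 = s ^ 2 by rw [ht]; ring]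

end JTP

/-- Jacobi triple product, bijectively: for every `n : ℕ` and `s : ℤ`, the number of
pairs `(μ, ν)` of partitions into distinct odd parts with `|μ| + |ν| = n` and
`ℓ(μ) - ℓ(ν) = s` equals the number of partitions of `n - s²` into (positive) even
parts; in particular this count is `0` when `s² > n`. -/
theorem jacobi_triple_product_bijective (n : ℕ) (s : ℤ) :
    Nat.card {p : Multiset ℕ × Multiset ℕ //
      (∀ i ∈ p.1, Odd i) ∧ p.1.Nodup ∧
      (∀ i ∈ p.2, Odd i) ∧ p.2.Nodup ∧
      p.1.sum + p.2.sum = n ∧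
      (Multiset.card p.1 : ℤ) - (Multiset.card p.2 : ℤ) = s} =
    Nat.card {lam : Multiset ℕ //
      (∀ i ∈ lam, 0 < i ∧ Even i) ∧ (lam.sum : ℤ) = (n : ℤ) - s ^ 2} := by
  have h := JTP.final n s
  exact h
end

section
/- For every natural number n, the number of partitions of n into odd parts in which every part size occurs at most three times equals the sum over all i + j = n of (the number of partitions of i into distinct odd parts) times (the number of partitions of j into distinct parts congruent to 2 modulo 4). -/
open Multiset

namespace OddM3Aux

/-- forward map -/
def toPair (lam : Multiset ℕ) : Multiset ℕ × Multiset ℕ :=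
  (lam.dedup.filter (fun i => lam.count i % 2 = 1),
   (lam.dedup.filter (fun i => 2 ≤ lam.count i)).map (fun i => 2 * i))

/-- backward map -/
def ofPair (p : Multiset ℕ × Multiset ℕ) : Multiset ℕ :=
  p.1 + p.2.map (fun v => v / 2) + p.2.map (fun v => v / 2)

lemma sum_half (ν : Multiset ℕ) (h : ∀ v ∈ ν, 2 ∣ v) :
    (ν.map (fun v => v / 2)).sum + (ν.map (fun v => v / 2)).sum = ν.sum := by
  induction ν using Multiset.induction with
  | empty => simp
  | cons a s ih =>
    simp only [Multiset.map_cons, Multiset.sum_cons]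
    have ha : 2 ∣ a := h a (Multiset.mem_cons_self a s)
    have := ih (fun v hv => h v (Multiset.mem_cons_of_mem hv))
    omega

lemma ofPair_sum (p : Multiset ℕ × Multiset ℕ) (h : ∀ v ∈ p.2, 2 ∣ v) :
    (ofPair p).sum = p.1.sum + p.2.sum := by
  simp only [ofPair, Multiset.sum_add]
  rw [add_assoc, sum_half _ h]

lemma mem_map_half {ν : Multiset ℕ} (h : ∀ v ∈ ν, 2 ∣ v) (i : ℕ) :
    i ∈ ν.map (fun v => v / 2) ↔ 2 * i ∈ ν := by
  constructor
  · rintro hm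
    obtain ⟨v, hv, rfl⟩ := Multiset.mem_map.mp hm
    have := h v hv
    have : 2 * (v / 2) = v := by omega
    rwa [this]
  · intro hm
    exact Multiset.mem_map.mpr ⟨2 * i, hm, by omega⟩

lemma count_ofPair (p : Multiset ℕ × Multiset ℕ) (h1 : p.1.Nodup) (h2 : p.2.Nodup)
    (hdvd : ∀ v ∈ p.2, 2 ∣ v) (i : ℕ) :
    (ofPair p).count i =
      (if i ∈ p.1 then 1 else 0) + ((if 2 * i ∈ p.2 then 1 else 0)
        + (if 2 * i ∈ p.2 then 1 else 0)) := by
  have hnodup : (p.2.map (fun v => v / 2)).Nodup := by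
    refine h2.map_on ?_
    intro x hx y hy hxy
    have := hdvd x hx; have := hdvd y hy
    omega
  have hc1 : p.1.count i = if i ∈ p.1 then 1 else 0 := by
    split_ifs with h
    · exact Multiset.count_eq_one_of_mem h1 h
    · exact Multiset.count_eq_zero_of_notMem h
  have hc2 : (p.2.map (fun v => v / 2)).count i = if 2 * i ∈ p.2 then 1 else 0 := by
    split_ifs with h
    · exact Multiset.count_eq_one_of_mem hnodup ((mem_map_half hdvd i).mpr h)
    · exact Multiset.count_eq_zero_of_notMem (fun hm => h ((mem_map_half hdvd i).mp hm))
  simp [ofPair, hc1, hc2, add_assoc]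

end OddM3Aux

namespace OddM3Aux

lemma map_half_toPair (lam : Multiset ℕ) :
    (toPair lam).2.map (fun v => v / 2) = lam.dedup.filter (fun i => 2 ≤ lam.count i) := by
  simp only [toPair, Multiset.map_map, Function.comp]
  refine Eq.trans (Multiset.map_congr rfl fun i _ => ?_) (Multiset.map_id' _)
  show 2 * i / 2 = i
  omega

lemma ofPair_toPair (lam : Multiset ℕ) (h3 : ∀ i, lam.count i ≤ 3) :
    ofPair (toPair lam) = lam := by
  refine Multiset.ext.mpr fun i => ?_
  have hc := h3 i
  rw [show ofPair (toPair lam) = (toPair lam).1 + (toPair lam).2.map (fun v => v / 2)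
      + (toPair lam).2.map (fun v => v / 2) from rfl, map_half_toPair]
  simp only [toPair, Multiset.count_add, Multiset.count_filter, Multiset.count_dedup]
  simp only [show ∀ (s : Multiset ℕ), (i ∈ s) = (0 < s.count i) from
    fun s => propext Multiset.count_pos.symm]
  split_ifs <;> omega

lemma toPair_ofPair (p : Multiset ℕ × Multiset ℕ) (h1 : p.1.Nodup) (h2 : p.2.Nodup)
    (hdvd : ∀ v ∈ p.2, 2 ∣ v) : toPair (ofPair p) = p := by
  have hcount := count_ofPair p h1 h2 hdvd
  have hmem : ∀ i, i ∈ ofPair p ↔ (i ∈ p.1 ∨ 2 * i ∈ p.2) := by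
    intro i
    rw [← Multiset.count_pos, hcount]
    by_cases ha : i ∈ p.1 <;> by_cases hb : 2 * i ∈ p.2 <;> simp [ha, hb]
  have hmapnodup : (p.2.map (fun v => v / 2)).Nodup := by
    refine h2.map_on ?_
    intro x hx y hy hxy
    have := hdvd x hx; have := hdvd y hy
    omega
  have hfilter : (ofPair p).dedup.filter (fun i => 2 ≤ (ofPair p).count i)
      = p.2.map (fun v => v / 2) := by
    refine ((Multiset.nodup_dedup _).filter _).ext hmapnodup |>.mpr fun i => ?_
    rw [Multiset.mem_filter, Multiset.mem_dedup, hmem, hcount, mem_map_half hdvd]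
    by_cases ha : i ∈ p.1 <;> by_cases hb : 2 * i ∈ p.2 <;> simp [ha, hb]
  have hback : (p.2.map (fun v => v / 2)).map (fun i => 2 * i) = p.2 := by
    rw [Multiset.map_map]
    refine Eq.trans (Multiset.map_congr rfl fun v hv => ?_) (Multiset.map_id' _)
    have := hdvd v hv
    show 2 * (v / 2) = v
    omega
  refine Prod.ext ?_ ?_
  · refine ((Multiset.nodup_dedup _).filter _).ext h1 |>.mpr fun i => ?_
    rw [Multiset.mem_filter, Multiset.mem_dedup, hmem, hcount]
    by_cases ha : i ∈ p.1 <;> by_cases hb : 2 * i ∈ p.2 <;> simp [ha, hb]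
  · show _ = p.2
    rw [show (toPair (ofPair p)).2 = _ from rfl]
    simp only [toPair]
    rw [hfilter, hback]

end OddM3Aux

namespace OddM3Aux

lemma toPair_fst_cond (lam : Multiset ℕ) (hodd : ∀ i ∈ lam, Odd i) :
    (∀ i ∈ (toPair lam).1, Odd i) ∧ (toPair lam).1.Nodup :=
  ⟨fun i hi => hodd i (Multiset.mem_dedup.mp (Multiset.mem_filter.mp hi).1),
   (Multiset.nodup_dedup _).filter _⟩

lemma toPair_snd_cond (lam : Multiset ℕ) (hodd : ∀ i ∈ lam, Odd i) :
    (∀ v ∈ (toPair lam).2, v % 4 = 2) ∧ (toPair lam).2.Nodup := by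
  constructor
  · intro v hv
    obtain ⟨i, hi, rfl⟩ := Multiset.mem_map.mp hv
    have h := hodd i (Multiset.mem_dedup.mp (Multiset.mem_filter.mp hi).1)
    rw [Nat.odd_iff] at h
    omega
  · exact ((Multiset.nodup_dedup _).filter _).map (fun a b h => by omega)

lemma toPair_dvd (lam : Multiset ℕ) : ∀ v ∈ (toPair lam).2, 2 ∣ v := by
  intro v hv
  obtain ⟨i, _, rfl⟩ := Multiset.mem_map.mp hv
  omega

lemma toPair_sum (lam : Multiset ℕ) (h3 : ∀ i, lam.count i ≤ 3) :
    (toPair lam).1.sum + (toPair lam).2.sum = lam.sum := by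
  conv_rhs => rw [← ofPair_toPair lam h3]
  rw [ofPair_sum _ (toPair_dvd lam)]

/-- the equivalence between the two kinds of partitions -/
def mainEquiv (n : ℕ) :
    {lam : Multiset ℕ // (∀ i ∈ lam, Odd i) ∧ (∀ i, lam.count i ≤ 3) ∧ lam.sum = n} ≃
    {p : Multiset ℕ × Multiset ℕ //
      ((∀ i ∈ p.1, Odd i) ∧ p.1.Nodup) ∧ ((∀ i ∈ p.2, i % 4 = 2) ∧ p.2.Nodup) ∧
      p.1.sum + p.2.sum = n} where
  toFun x := ⟨toPair x.1, toPair_fst_cond x.1 x.2.1, toPair_snd_cond x.1 x.2.1,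
    by rw [toPair_sum x.1 x.2.2.1]; exact x.2.2.2⟩
  invFun x := ⟨ofPair x.1, by
    obtain ⟨p, ⟨hodd1, hnd1⟩, ⟨hmod, hnd2⟩, hsum⟩ := x
    have hdvd : ∀ v ∈ p.2, 2 ∣ v := fun v hv => by have := hmod v hv; omega
    refine ⟨?_, ?_, ?_⟩
    · intro i hi
      rcases Multiset.mem_add.mp hi with h' | h
      rcases Multiset.mem_add.mp h' with h | h
      · exact hodd1 i h
      all_goals {
        obtain ⟨v, hv, rfl⟩ := Multiset.mem_map.mp h
        have := hmod v hv
        rw [Nat.odd_iff]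
        omega }
    · intro i
      rw [count_ofPair p hnd1 hnd2 hdvd]
      split_ifs <;> omega
    · rw [ofPair_sum p hdvd]; exact hsum⟩
  left_inv x := Subtype.ext (ofPair_toPair x.1 x.2.2.1)
  right_inv x := by
    obtain ⟨p, ⟨hodd1, hnd1⟩, ⟨hmod, hnd2⟩, hsum⟩ := x
    exact Subtype.ext (toPair_ofPair p hnd1 hnd2 (fun v hv => by have := hmod v hv; omega))

lemma finite_aux {P : Multiset ℕ → Prop} (hP : ∀ mu i, P mu → i ∈ mu → 0 < i) (k : ℕ) :
    Finite {mu : Multiset ℕ // P mu ∧ mu.sum = k} := by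
  refine Finite.of_injective
    (fun x => (⟨x.1, fun hi => hP x.1 _ x.2.1 hi, x.2.2⟩ : Nat.Partition k)) ?_
  intro a b h
  exact Subtype.ext (congrArg Nat.Partition.parts h)

lemma nat_card_sigma {ι : Type*} [Fintype ι] (f : ι → Type*) [∀ i, Finite (f i)] :
    Nat.card (Sigma f) = ∑ i, Nat.card (f i) := by
  letI := fun i => Fintype.ofFinite (f i)
  simp [Nat.card_eq_fintype_card]

lemma card_conv (P Q : Multiset ℕ → Prop)
    (hP : ∀ mu i, P mu → i ∈ mu → 0 < i) (hQ : ∀ nu i, Q nu → i ∈ nu → 0 < i) (n : ℕ) :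
    Nat.card {p : Multiset ℕ × Multiset ℕ // P p.1 ∧ Q p.2 ∧ p.1.sum + p.2.sum = n} =
    ∑ p ∈ Finset.HasAntidiagonal.antidiagonal n,
      Nat.card {mu : Multiset ℕ // P mu ∧ mu.sum = p.1} *
      Nat.card {nu : Multiset ℕ // Q nu ∧ nu.sum = p.2} := by
  haveI : ∀ k, Finite {mu : Multiset ℕ // P mu ∧ mu.sum = k} := finite_aux hP
  haveI : ∀ k, Finite {nu : Multiset ℕ // Q nu ∧ nu.sum = k} := finite_aux hQ
  set T := {p : Multiset ℕ × Multiset ℕ // P p.1 ∧ Q p.2 ∧ p.1.sum + p.2.sum = n} with hT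
  let f : T → (Finset.HasAntidiagonal.antidiagonal n : Finset (ℕ × ℕ)) :=
    fun x => ⟨(x.1.1.sum, x.1.2.sum), Finset.HasAntidiagonal.mem_antidiagonal.mpr x.2.2.2⟩
  let e : ∀ q : (Finset.HasAntidiagonal.antidiagonal n : Finset (ℕ × ℕ)),
      {x : T // f x = q} ≃
      ({mu : Multiset ℕ // P mu ∧ mu.sum = q.1.1} ×
       {nu : Multiset ℕ // Q nu ∧ nu.sum = q.1.2}) := fun q =>
    { toFun := fun x =>
        (⟨x.1.1.1, x.1.2.1, congrArg Prod.fst (congrArg Subtype.val x.2)⟩,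
         ⟨x.1.1.2, x.1.2.2.1, congrArg Prod.snd (congrArg Subtype.val x.2)⟩)
      invFun := fun mn =>
        ⟨⟨(mn.1.1, mn.2.1), mn.1.2.1, mn.2.2.1, by
          rw [mn.1.2.2, mn.2.2.2]; exact Finset.HasAntidiagonal.mem_antidiagonal.mp q.2⟩,
         Subtype.ext (Prod.ext mn.1.2.2 mn.2.2.2)⟩
      left_inv := fun x => by ext <;> rfl
      right_inv := fun mn => by ext <;> rfl }
  haveI : ∀ q : (Finset.HasAntidiagonal.antidiagonal n : Finset (ℕ × ℕ)), Finite {x : T // f x = q} :=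
    fun q => Finite.of_equiv _ (e q).symm
  calc Nat.card T = Nat.card (Σ q : (Finset.HasAntidiagonal.antidiagonal n : Finset (ℕ × ℕ)),
        {x : T // f x = q}) := Nat.card_congr (Equiv.sigmaFiberEquiv f).symm
    _ = ∑ q : (Finset.HasAntidiagonal.antidiagonal n : Finset (ℕ × ℕ)), Nat.card {x : T // f x = q} :=
        nat_card_sigma _
    _ = ∑ q : (Finset.HasAntidiagonal.antidiagonal n : Finset (ℕ × ℕ)),
        Nat.card {mu : Multiset ℕ // P mu ∧ mu.sum = q.1.1} *
        Nat.card {nu : Multiset ℕ // Q nu ∧ nu.sum = q.1.2} := by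
        refine Finset.sum_congr rfl fun q _ => ?_
        rw [Nat.card_congr (e q), Nat.card_prod]
    _ = _ := Finset.sum_coe_sort (Finset.HasAntidiagonal.antidiagonal n)
        (fun p => Nat.card {mu : Multiset ℕ // P mu ∧ mu.sum = p.1} *
          Nat.card {nu : Multiset ℕ // Q nu ∧ nu.sum = p.2})

end OddM3Aux

/-- The number of partitions of `n` into odd parts with each part size occurring at most
three times equals the sum over `i + j = n` of (number of partitions of `i` into distinct
odd parts) times (number of partitions of `j` into distinct parts `≡ 2 (mod 4)`). -/
theorem oddM3_eq_conv_distinctOdd_distinctTwoModFour (n : ℕ) :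
    Nat.card {lam : Multiset ℕ //
      (∀ i ∈ lam, Odd i) ∧ (∀ i, lam.count i ≤ 3) ∧ lam.sum = n} =
    ∑ p ∈ Finset.HasAntidiagonal.antidiagonal n,
      Nat.card {mu : Multiset ℕ //
        (∀ i ∈ mu, Odd i) ∧ mu.Nodup ∧ mu.sum = p.1} *
      Nat.card {nu : Multiset ℕ //
        (∀ i ∈ nu, i % 4 = 2) ∧ nu.Nodup ∧ nu.sum = p.2} := by
  rw [Nat.card_congr (OddM3Aux.mainEquiv n),
    OddM3Aux.card_conv (fun mu => (∀ i ∈ mu, Odd i) ∧ mu.Nodup)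
      (fun nu => (∀ i ∈ nu, i % 4 = 2) ∧ nu.Nodup)
      (fun mu i h hi => by have := h.1 i hi; rw [Nat.odd_iff] at this; omega)
      (fun nu i h hi => by have := h.1 i hi; omega) n]
  refine Finset.sum_congr rfl fun p _ => ?_
  rw [Nat.card_congr (Equiv.subtypeEquivRight
        (p := fun mu : Multiset ℕ => ((∀ i ∈ mu, Odd i) ∧ mu.Nodup) ∧ mu.sum = p.1)
        (q := fun mu : Multiset ℕ =>
        (∀ i ∈ mu, Odd i) ∧ mu.Nodup ∧ mu.sum = p.1) fun mu => by tauto),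
    Nat.card_congr (Equiv.subtypeEquivRight
        (p := fun nu : Multiset ℕ => ((∀ i ∈ nu, i % 4 = 2) ∧ nu.Nodup) ∧ nu.sum = p.2)
        (q := fun nu : Multiset ℕ =>
        (∀ i ∈ nu, i % 4 = 2) ∧ nu.Nodup ∧ nu.sum = p.2) fun nu => by tauto)]
end

section
/- For every natural number n, the total number of partitions of n equals the sum over all i + j = n of (the number of partitions of i in which every part size occurs at most three times) times (the number of partitions of j into parts divisible by 4). -/
open Multiset

private noncomputable def muOf (lam : Multiset ℕ) : Multiset ℕ :=
  Multiset.toFinsupp.symm (Finsupp.mapRange (· % 4) (by simp) lam.toFinsupp)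

private noncomputable def qOf (lam : Multiset ℕ) : Multiset ℕ :=
  Multiset.toFinsupp.symm (Finsupp.mapRange (· / 4) (by simp) lam.toFinsupp)

private lemma count_muOf (lam : Multiset ℕ) (i : ℕ) : (muOf lam).count i = lam.count i % 4 := by
  simp [muOf]

private lemma count_qOf (lam : Multiset ℕ) (i : ℕ) : (qOf lam).count i = lam.count i / 4 := by
  simp [qOf]

private lemma decomp (lam : Multiset ℕ) : lam = muOf lam + 4 • qOf lam := by
  ext i
  simp [count_muOf, count_qOf, Nat.mod_add_div]

private lemma sum_nsmul' (k : ℕ) (s : Multiset ℕ) : (k • s).sum = k * s.sum := by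
  induction k with
  | zero => simp
  | succ n ih => rw [succ_nsmul, Multiset.sum_add, ih, Nat.succ_mul]

private lemma sum_map_four (s : Multiset ℕ) : (s.map (fun i => 4 * i)).sum = 4 * s.sum := by
  rw [show (fun i => 4 * i) = (fun i => 4 * id i) from rfl, Multiset.sum_map_mul_left]
  simp

private noncomputable def pairEquiv (n : ℕ) :
    {lam : Multiset ℕ // (∀ i ∈ lam, 0 < i) ∧ lam.sum = n} ≃
    {x : Multiset ℕ × Multiset ℕ // (∀ i ∈ x.1, 0 < i) ∧ (∀ i, x.1.count i ≤ 3) ∧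
      (∀ i ∈ x.2, 0 < i) ∧ (∀ i ∈ x.2, 4 ∣ i) ∧ x.1.sum + x.2.sum = n} where
  toFun lam := by
    obtain ⟨lam, hpos, hsum⟩ := lam
    refine ⟨(muOf lam, (qOf lam).map (fun i => 4 * i)), ?_, ?_, ?_, ?_, ?_⟩
    · intro i hi
      apply hpos
      rw [← Multiset.count_pos] at hi ⊢
      rw [count_muOf] at hi
      omega
    · intro i
      rw [count_muOf]; omega
    · intro i hi
      rw [Multiset.mem_map] at hi
      obtain ⟨j, hj, rfl⟩ := hi
      have : 0 < j := by
        apply hpos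
        rw [← Multiset.count_pos] at hj ⊢
        rw [count_qOf] at hj
        omega
      omega
    · intro i hi
      rw [Multiset.mem_map] at hi
      obtain ⟨j, hj, rfl⟩ := hi
      exact ⟨j, rfl⟩
    · rw [sum_map_four, ← sum_nsmul', ← Multiset.sum_add, ← decomp, hsum]
  invFun x := by
    obtain ⟨⟨mu, nu⟩, hmupos, hcnt, hnupos, hdiv, hsum⟩ := x
    refine ⟨mu + 4 • (nu.map (fun i => i / 4)), ?_, ?_⟩
    · intro i hi
      rw [Multiset.mem_add] at hi
      rcases hi with hi | hi
      · exact hmupos i hi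
      · obtain ⟨-, hi⟩ := Multiset.mem_nsmul.mp hi
        rw [Multiset.mem_map] at hi
        obtain ⟨j, hj, rfl⟩ := hi
        have h4 := hdiv j hj
        have := hnupos j hj
        omega
    · rw [Multiset.sum_add, sum_nsmul']
      have hmap : nu.map (fun i => 4 * (i / 4)) = nu := by
        conv_rhs => rw [← Multiset.map_id nu]
        apply Multiset.map_congr rfl
        intro j hj
        have := hdiv j hj
        simp only [id]
        omega
      have : (4 : ℕ) * (nu.map (fun i => i / 4)).sum = nu.sum := by
        rw [show (fun i => i / 4) = (fun i => id (i / 4)) from rfl,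
          ← Multiset.sum_map_mul_left]
        simp only [id]
        rw [hmap]
      rw [this, hsum]
  left_inv lam := by
    apply Subtype.ext
    obtain ⟨lam, hpos, hsum⟩ := lam
    simp only
    rw [Multiset.map_map]
    have : ((fun i => i / 4) ∘ fun i => 4 * i) = id := by
      funext i; simp [Nat.mul_div_cancel_left i (show 0 < 4 by norm_num)]
    rw [this, Multiset.map_id, ← decomp]
  right_inv x := by
    apply Subtype.ext
    obtain ⟨⟨mu, nu⟩, hmupos, hcnt, hnupos, hdiv, hsum⟩ := x
    simp only
    have hq : qOf (mu + 4 • nu.map (fun i => i / 4)) = nu.map (fun i => i / 4) := by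
      ext i
      rw [count_qOf, Multiset.count_add, Multiset.count_nsmul]
      have h3 : mu.count i ≤ 3 := hcnt i
      omega
    apply Prod.ext
    · simp only
      ext i
      rw [count_muOf, Multiset.count_add, Multiset.count_nsmul]
      have h3 : mu.count i ≤ 3 := hcnt i
      omega
    · simp only
      rw [hq, Multiset.map_map]
      conv_rhs => rw [← Multiset.map_id nu]
      apply Multiset.map_congr rfl
      intro j hj
      have := hdiv j hj
      simp only [Function.comp_apply, id]
      omega

private lemma finPart (m : ℕ) : Finite {lam : Multiset ℕ // (∀ i ∈ lam, 0 < i) ∧ lam.sum = m} :=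
  Finite.of_injective (fun x => (⟨x.1, fun h => x.2.1 _ h, x.2.2⟩ : Nat.Partition m))
    fun a b h => Subtype.ext (congrArg Nat.Partition.parts h)

private lemma finM (m : ℕ) :
    Finite {mu : Multiset ℕ // (∀ i ∈ mu, 0 < i) ∧ (∀ i, mu.count i ≤ 3) ∧ mu.sum = m} := by
  have := finPart m
  exact Finite.of_injective
    (fun x => (⟨x.1, x.2.1, x.2.2.2⟩ : {lam : Multiset ℕ // (∀ i ∈ lam, 0 < i) ∧ lam.sum = m}))
    fun a b h => by simpa [Subtype.ext_iff] using h

private lemma finN (m : ℕ) :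
    Finite {nu : Multiset ℕ // (∀ i ∈ nu, 0 < i) ∧ (∀ i ∈ nu, 4 ∣ i) ∧ nu.sum = m} := by
  have := finPart m
  exact Finite.of_injective
    (fun x => (⟨x.1, x.2.1, x.2.2.2⟩ : {lam : Multiset ℕ // (∀ i ∈ lam, 0 < i) ∧ lam.sum = m}))
    fun a b h => by simpa [Subtype.ext_iff] using h

private lemma nat_card_sigma {ι : Type*} [Fintype ι] (f : ι → Type*) [∀ i, Finite (f i)] :
    Nat.card (Σ i, f i) = ∑ i, Nat.card (f i) := by
  have := fun i => Fintype.ofFinite (f i)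
  rw [Nat.card_eq_fintype_card, Fintype.card_sigma]
  exact Finset.sum_congr rfl fun i _ => (Nat.card_eq_fintype_card).symm

private noncomputable def fiberEquiv (n : ℕ) (y : ℕ × ℕ) (hy : y ∈ Finset.HasAntidiagonal.antidiagonal n) :
    {x : {x : Multiset ℕ × Multiset ℕ // (∀ i ∈ x.1, 0 < i) ∧ (∀ i, x.1.count i ≤ 3) ∧
        (∀ i ∈ x.2, 0 < i) ∧ (∀ i ∈ x.2, 4 ∣ i) ∧ x.1.sum + x.2.sum = n} //
        (x.1.1.sum, x.1.2.sum) = y} ≃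
    {mu : Multiset ℕ // (∀ i ∈ mu, 0 < i) ∧ (∀ i, mu.count i ≤ 3) ∧ mu.sum = y.1} ×
    {nu : Multiset ℕ // (∀ i ∈ nu, 0 < i) ∧ (∀ i ∈ nu, 4 ∣ i) ∧ nu.sum = y.2} where
  toFun x :=
    (⟨x.1.1.1, x.1.2.1, x.1.2.2.1, by rw [← congrArg Prod.fst x.2]⟩,
     ⟨x.1.1.2, x.1.2.2.2.1, x.1.2.2.2.2.1, by rw [← congrArg Prod.snd x.2]⟩)
  invFun m :=
    ⟨⟨(m.1.1, m.2.1), m.1.2.1, m.1.2.2.1, m.2.2.1, m.2.2.2.1, by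
        rw [m.1.2.2.2, m.2.2.2.2]; exact Finset.HasAntidiagonal.mem_antidiagonal.mp hy⟩, by
        simp only
        rw [m.1.2.2.2, m.2.2.2.2]⟩
  left_inv x := Subtype.ext (Subtype.ext rfl)
  right_inv m := rfl

/-- The total number of partitions of `n` equals the sum over `i + j = n` of
(number of partitions of `i` with each part size occurring at most three times) times
(number of partitions of `j` into parts divisible by `4`). -/
theorem partitions_eq_conv_M3_fourDiv (n : ℕ) :
    Nat.card {lam : Multiset ℕ // (∀ i ∈ lam, 0 < i) ∧ lam.sum = n} =
    ∑ p ∈ Finset.HasAntidiagonal.antidiagonal n,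
      Nat.card {mu : Multiset ℕ //
        (∀ i ∈ mu, 0 < i) ∧ (∀ i, mu.count i ≤ 3) ∧ mu.sum = p.1} *
      Nat.card {nu : Multiset ℕ //
        (∀ i ∈ nu, 0 < i) ∧ (∀ i ∈ nu, 4 ∣ i) ∧ nu.sum = p.2} := by
  classical
  haveI := finPart n
  haveI hT : Finite {x : Multiset ℕ × Multiset ℕ // (∀ i ∈ x.1, 0 < i) ∧
      (∀ i, x.1.count i ≤ 3) ∧ (∀ i ∈ x.2, 0 < i) ∧ (∀ i ∈ x.2, 4 ∣ i) ∧
      x.1.sum + x.2.sum = n} :=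
    Finite.of_equiv _ (pairEquiv n)
  rw [Nat.card_congr (pairEquiv n)]
  let fiberMap : {x : Multiset ℕ × Multiset ℕ // (∀ i ∈ x.1, 0 < i) ∧
      (∀ i, x.1.count i ≤ 3) ∧ (∀ i ∈ x.2, 0 < i) ∧ (∀ i ∈ x.2, 4 ∣ i) ∧
      x.1.sum + x.2.sum = n} → (Finset.HasAntidiagonal.antidiagonal n : Finset (ℕ × ℕ)) :=
    fun x => ⟨(x.1.1.sum, x.1.2.sum), Finset.HasAntidiagonal.mem_antidiagonal.mpr x.2.2.2.2.2⟩
  rw [Nat.card_congr (Equiv.sigmaFiberEquiv fiberMap).symm]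
  rw [nat_card_sigma]
  rw [← Finset.sum_coe_sort (Finset.HasAntidiagonal.antidiagonal n)
    (fun p => Nat.card {mu : Multiset ℕ //
        (∀ i ∈ mu, 0 < i) ∧ (∀ i, mu.count i ≤ 3) ∧ mu.sum = p.1} *
      Nat.card {nu : Multiset ℕ //
        (∀ i ∈ nu, 0 < i) ∧ (∀ i ∈ nu, 4 ∣ i) ∧ nu.sum = p.2})]
  apply Finset.sum_congr rfl
  intro y _
  haveI := finM y.1.1
  haveI := finN y.1.2
  rw [← Nat.card_prod]
  apply Nat.card_congr
  exact (Equiv.subtypeEquivRight fun x => Subtype.ext_iff).trans (fiberEquiv n y.1 y.2)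
end

section
/- Let m ≥ 2 be an integer. For natural numbers n and ℓ, let A(n, ℓ) denote the number of finite sets S of pairs (k, c) of natural numbers with 1 ≤ c ≤ m^k for every (k, c) ∈ S, such that Σ_{(k,c)∈S} m^k = n and |S| = ℓ (colored m-ary strict partitions of weight n with ℓ parts). Then for all natural numbers n and ℓ, A(mn, ℓ) equals the sum over all m-tuples (n₁, …, n_m) and (ℓ₁, …, ℓ_m) of nonnegative integers with n₁ + ⋯ + n_m = n and ℓ₁ + ⋯ + ℓ_m = ℓ of the product A(n₁, ℓ₁)⋯A(n_m, ℓ_m). In particular, the sequence a_m(n) = Σ_ℓ A(n, ℓ) is m-convolutive. -/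
open Finset

namespace CMSP

variable (m : ℕ)

def Q (n ℓ : ℕ) (S : Finset (ℕ × ℕ)) : Prop :=
  (∀ p ∈ S, 1 ≤ p.2 ∧ p.2 ≤ m ^ p.1) ∧ (∑ p ∈ S, m ^ p.1) = n ∧ S.card = ℓ

noncomputable def F (n ℓ : ℕ) : Finset (Finset (ℕ × ℕ)) :=
  (Finset.range (n+1) ×ˢ Finset.range (n+1)).powerset.filter
    (fun S => @decide (Q m n ℓ S) (Classical.propDecidable _))

variable {m}

lemma term_le {S : Finset (ℕ × ℕ)} {n : ℕ} (hw : (∑ p ∈ S, m ^ p.1) = n)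
    {p : ℕ × ℕ} (hp : p ∈ S) : m ^ p.1 ≤ n := by
  subst hw
  exact Finset.single_le_sum (f := fun q : ℕ × ℕ => m ^ q.1) (fun q _ => Nat.zero_le _) hp

lemma Q_subset (hm : 2 ≤ m) {n ℓ : ℕ} {S : Finset (ℕ × ℕ)} (h : Q m n ℓ S) :
    S ⊆ Finset.range (n+1) ×ˢ Finset.range (n+1) := by
  intro p hp
  have h1 := (h.1 p hp)
  have h2 : m ^ p.1 ≤ n := term_le h.2.1 hp
  have h3 : p.1 < m ^ p.1 := Nat.lt_pow_self (by omega : 1 < m)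
  simp only [Finset.mem_product, Finset.mem_range]
  constructor <;> omega

lemma mem_F (hm : 2 ≤ m) {n ℓ : ℕ} {S : Finset (ℕ × ℕ)} :
    S ∈ F m n ℓ ↔ Q m n ℓ S := by
  simp only [F, Finset.mem_filter, Finset.mem_powerset, decide_eq_true_eq]
  exact ⟨fun h => h.2, fun h => ⟨Q_subset hm h, h⟩⟩

lemma card_F (hm : 2 ≤ m) (n ℓ : ℕ) :
    Nat.card {S : Finset (ℕ × ℕ) // Q m n ℓ S} = (F m n ℓ).card := by
  have : {S : Finset (ℕ × ℕ) | Q m n ℓ S} = ↑(F m n ℓ) := by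
    ext S; simp [mem_F hm]
  rw [← Set.ncard_coe_finset, ← this]
  rfl

lemma F_vanish (hm : 2 ≤ m) {n ℓ : ℕ} (h : n < ℓ) : (F m n ℓ).card = 0 := by
  rw [Finset.card_eq_zero]
  ext S
  simp only [mem_F hm, Finset.notMem_empty, iff_false]
  rintro ⟨hv, hw, hc⟩
  have : S.card ≤ ∑ p ∈ S, m ^ p.1 := by
    calc S.card = ∑ _p ∈ S, 1 := by simp
    _ ≤ ∑ p ∈ S, m ^ p.1 := Finset.sum_le_sum (fun p _ => Nat.one_le_pow _ _ (by omega))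
  omega

/-- no parts of size `m^0` when the weight is divisible by `m` -/
lemma no_zero (hm : 2 ≤ m) {n : ℕ} {S : Finset (ℕ × ℕ)}
    (hv : ∀ p ∈ S, 1 ≤ p.2 ∧ p.2 ≤ m ^ p.1) (hw : (∑ p ∈ S, m ^ p.1) = m * n) :
    ∀ p ∈ S, 1 ≤ p.1 := by
  intro p hp
  by_contra h
  have hp1 : p.1 = 0 := by omega
  have hp2 : p.2 = 1 := by have := hv p hp; rw [hp1] at this; simpa using this.2.antisymm this.1
  have hpe : p = (0, 1) := by ext <;> simp [hp1, hp2]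
  subst hpe
  have hsum : m ^ (0:ℕ) + ∑ q ∈ S.erase (0,1), m ^ q.1 = m * n := by
    rw [Finset.add_sum_erase _ (fun q : ℕ × ℕ => m ^ q.1) hp]
    exact hw
  have hdvd : m ∣ ∑ q ∈ S.erase (0,1), m ^ q.1 := by
    apply Finset.dvd_sum
    intro q hq
    have hq' : q ∈ S := Finset.mem_of_mem_erase hq
    have hqne : q ≠ (0,1) := Finset.ne_of_mem_erase hq
    have : 1 ≤ q.1 := by
      by_contra hq1
      have hq10 : q.1 = 0 := by omega
      have := hv q hq'
      rw [hq10] at this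
      simp only [pow_zero] at this
      have : q.2 = 1 := by omega
      exact hqne (by ext <;> simp [hq10, this])
    exact dvd_pow_self m (by omega)
  have h1 : m ∣ m * n := ⟨n, rfl⟩
  simp only [pow_zero] at hsum
  have he : m * n - ∑ q ∈ S.erase (0,1), m ^ q.1 = 1 := by omega
  have : m ∣ 1 := he ▸ Nat.dvd_sub h1 hdvd
  have := Nat.le_of_dvd one_pos this
  omega

def down (p : ℕ × ℕ) : ℕ × ℕ := (p.1 - 1, (p.2 - 1) / m + 1)
def up (i : ℕ) (p : ℕ × ℕ) : ℕ × ℕ := (p.1 + 1, (p.2 - 1) * m + i + 1)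

variable (m) in
def split (S : Finset (ℕ × ℕ)) (i : ℕ) : Finset (ℕ × ℕ) :=
  (S.filter fun p => (p.2 - 1) % m = i).image (down (m := m))

variable (m) in
def glue (f : Fin m → Finset (ℕ × ℕ)) : Finset (ℕ × ℕ) :=
  Finset.univ.biUnion fun i : Fin m => (f i).image (up (m := m) i)

lemma up_down (hm : 2 ≤ m) {p : ℕ × ℕ} (h1 : 1 ≤ p.1) (h2 : 1 ≤ p.2) {i : ℕ}
    (h3 : (p.2 - 1) % m = i) : up (m := m) i (down (m := m) p) = p := by
  unfold up down
  have h := Nat.div_add_mod' (p.2 - 1) m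
  ext <;> simp <;> omega

lemma down_up (hm : 2 ≤ m) {q : ℕ × ℕ} (h2 : 1 ≤ q.2) {i : ℕ} (hi : i < m) :
    down (m := m) (up (m := m) i q) = q := by
  unfold up down
  have h : ((q.2 - 1) * m + i) / m = q.2 - 1 := by
    rw [Nat.mul_comm, Nat.mul_add_div (by omega : 0 < m), Nat.div_eq_of_lt hi, Nat.add_zero]
  ext
  · simp
  · simp only [Nat.add_sub_cancel, h]
    omega

lemma mod_up (hm : 2 ≤ m) {q : ℕ × ℕ} {i : ℕ} (hi : i < m) :
    ((up (m := m) i q).2 - 1) % m = i := by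
  unfold up
  simp only [Nat.add_sub_cancel]
  rw [Nat.mul_comm, Nat.mul_add_mod]
  exact Nat.mod_eq_of_lt hi

lemma up_valid (hm : 2 ≤ m) {q : ℕ × ℕ} (h1 : 1 ≤ q.2) (h2 : q.2 ≤ m ^ q.1) {i : ℕ}
    (hi : i < m) :
    1 ≤ (up (m := m) i q).2 ∧ (up (m := m) i q).2 ≤ m ^ (up (m := m) i q).1
      ∧ 1 ≤ (up (m := m) i q).1 := by
  unfold up
  refine ⟨by simp, ?_, by simp⟩
  simp only
  have key : (q.2 - 1 + 1) * m ≤ m ^ q.1 * m := Nat.mul_le_mul_right _ (by omega)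
  have expand : (q.2 - 1 + 1) * m = (q.2 - 1) * m + m := by ring
  rw [pow_succ]
  omega

lemma down_valid (hm : 2 ≤ m) {p : ℕ × ℕ} (h0 : 1 ≤ p.1) (h1 : 1 ≤ p.2)
    (h2 : p.2 ≤ m ^ p.1) :
    1 ≤ (down (m := m) p).2 ∧ (down (m := m) p).2 ≤ m ^ (down (m := m) p).1 := by
  unfold down
  refine ⟨by simp, ?_⟩
  simp only
  have hpow : m ^ p.1 = m ^ (p.1 - 1) * m := by
    rw [← pow_succ]
    congr 1
    omega
  have : (p.2 - 1) / m < m ^ (p.1 - 1) := by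
    rw [Nat.div_lt_iff_lt_mul (by omega : 0 < m)]
    omega
  omega


section
variable {S : Finset (ℕ × ℕ)} {f : Fin m → Finset (ℕ × ℕ)}

lemma mem_glue {p : ℕ × ℕ} :
    p ∈ glue m f ↔ ∃ i : Fin m, ∃ q ∈ f i, up (m := m) i q = p := by
  simp [glue]

lemma glue_valid (hm : 2 ≤ m) (hf : ∀ i, ∀ q ∈ f i, 1 ≤ q.2 ∧ q.2 ≤ m ^ q.1) :
    ∀ p ∈ glue m f, (1 ≤ p.2 ∧ p.2 ≤ m ^ p.1) ∧ 1 ≤ p.1 := by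
  intro p hp
  rw [mem_glue] at hp
  obtain ⟨i, q, hq, rfl⟩ := hp
  obtain ⟨h1, h2⟩ := hf i q hq
  obtain ⟨a, b, c⟩ := up_valid hm h1 h2 i.isLt
  exact ⟨⟨a, b⟩, c⟩

lemma split_glue (hm : 2 ≤ m) (hf : ∀ i, ∀ q ∈ f i, 1 ≤ q.2 ∧ q.2 ≤ m ^ q.1) (i : Fin m) :
    split m (glue m f) (i : ℕ) = f i := by
  ext q
  simp only [split, Finset.mem_image, Finset.mem_filter]
  constructor
  · rintro ⟨p, ⟨hp, hmod⟩, rfl⟩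
    rw [mem_glue] at hp
    obtain ⟨j, r, hr, rfl⟩ := hp
    have hj : ((up (m := m) (j : ℕ) r).2 - 1) % m = j := mod_up hm j.isLt
    have hji : j = i := Fin.ext (by rw [← hmod, hj])
    rw [down_up hm (hf j r hr).1 j.isLt, ← hji]
    exact hr
  · intro hq
    refine ⟨up (m := m) i q, ⟨?_, mod_up hm i.isLt⟩, down_up hm (hf i q hq).1 i.isLt⟩
    rw [mem_glue]
    exact ⟨i, q, hq, rfl⟩

lemma glue_split (hm : 2 ≤ m) (hv : ∀ p ∈ S, 1 ≤ p.2 ∧ p.2 ≤ m ^ p.1)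
    (hk : ∀ p ∈ S, 1 ≤ p.1) :
    glue m (fun i : Fin m => split m S i) = S := by
  ext p
  rw [mem_glue]
  constructor
  · rintro ⟨i, q, hq, rfl⟩
    simp only [split, Finset.mem_image, Finset.mem_filter] at hq
    obtain ⟨r, ⟨hr, hmod⟩, rfl⟩ := hq
    rw [up_down hm (hk r hr) (hv r hr).1 hmod]
    exact hr
  · intro hp
    have hi : (p.2 - 1) % m < m := Nat.mod_lt _ (by omega)
    refine ⟨⟨(p.2 - 1) % m, hi⟩, down (m := m) p, ?_, up_down hm (hk p hp) (hv p hp).1 rfl⟩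
    simp only [split, Finset.mem_image, Finset.mem_filter]
    exact ⟨p, ⟨hp, rfl⟩, rfl⟩

lemma glue_disj (hm : 2 ≤ m) :
    ∀ i ∈ (Finset.univ : Finset (Fin m)), ∀ j ∈ Finset.univ, i ≠ j →
      Disjoint ((f i).image (up (m := m) i)) ((f j).image (up (m := m) j)) := by
  intro i _ j _ hij
  rw [Finset.disjoint_left]
  intro p hpi hpj
  simp only [Finset.mem_image] at hpi hpj
  obtain ⟨q, hq, rfl⟩ := hpi
  obtain ⟨q', hq', he⟩ := hpj
  apply hij
  have h1 : ((up (m := m) (i : ℕ) q).2 - 1) % m = i := mod_up hm i.isLt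
  have h2 : ((up (m := m) (j : ℕ) q').2 - 1) % m = j := mod_up hm j.isLt
  rw [he] at h2
  exact Fin.ext (by omega)

lemma up_injOn (hm : 2 ≤ m) {i : ℕ} (hi : i < m) (hfi : ∀ q ∈ (f' : Finset (ℕ × ℕ)), 1 ≤ q.2) :
    ∀ q ∈ f', ∀ q' ∈ f', up (m := m) i q = up (m := m) i q' → q = q' := by
  intro q hq q' hq' h
  rw [← down_up hm (hfi q hq) hi, ← down_up hm (hfi q' hq') hi, h]

lemma glue_card (hm : 2 ≤ m) (hf : ∀ i, ∀ q ∈ f i, 1 ≤ q.2 ∧ q.2 ≤ m ^ q.1) :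
    (glue m f).card = ∑ i, (f i).card := by
  rw [glue, Finset.card_biUnion (glue_disj hm)]
  refine Finset.sum_congr rfl fun i _ => ?_
  exact Finset.card_image_of_injOn fun q hq q' hq' h =>
    up_injOn hm i.isLt (fun r hr => (hf i r hr).1) q hq q' hq' h

lemma glue_weight (hm : 2 ≤ m) (hf : ∀ i, ∀ q ∈ f i, 1 ≤ q.2 ∧ q.2 ≤ m ^ q.1) :
    (∑ p ∈ glue m f, m ^ p.1) = ∑ i, ∑ q ∈ f i, m ^ (q.1 + 1) := by
  rw [glue, Finset.sum_biUnion (glue_disj hm)]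
  refine Finset.sum_congr rfl fun i _ => ?_
  rw [Finset.sum_image (up_injOn hm i.isLt (fun r hr => (hf i r hr).1))]
  rfl

lemma split_valid (hm : 2 ≤ m) (hv : ∀ p ∈ S, 1 ≤ p.2 ∧ p.2 ≤ m ^ p.1)
    (hk : ∀ p ∈ S, 1 ≤ p.1) (i : ℕ) :
    ∀ q ∈ split m S i, 1 ≤ q.2 ∧ q.2 ≤ m ^ q.1 := by
  intro q hq
  simp only [split, Finset.mem_image, Finset.mem_filter] at hq
  obtain ⟨p, ⟨hp, _⟩, rfl⟩ := hq
  exact down_valid hm (hk p hp) (hv p hp).1 (hv p hp).2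

lemma split_weight (hm : 2 ≤ m) (hv : ∀ p ∈ S, 1 ≤ p.2 ∧ p.2 ≤ m ^ p.1)
    (hk : ∀ p ∈ S, 1 ≤ p.1) :
    ∑ i : Fin m, ∑ q ∈ split m S i, m ^ (q.1 + 1) = ∑ p ∈ S, m ^ p.1 := by
  conv_rhs => rw [← glue_split hm hv hk]
  rw [glue_weight hm fun i => split_valid hm hv hk i]

lemma split_card (hm : 2 ≤ m) (hv : ∀ p ∈ S, 1 ≤ p.2 ∧ p.2 ≤ m ^ p.1)
    (hk : ∀ p ∈ S, 1 ≤ p.1) :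
    ∑ i : Fin m, (split m S i).card = S.card := by
  conv_rhs => rw [← glue_split hm hv hk]
  rw [glue_card hm fun i => split_valid hm hv hk i]

end


lemma pow_succ_sum (T : Finset (ℕ × ℕ)) :
    ∑ q ∈ T, m ^ (q.1 + 1) = (∑ q ∈ T, m ^ q.1) * m := by
  rw [Finset.sum_mul]
  exact Finset.sum_congr rfl fun q _ => pow_succ m q.1

lemma main (hm : 2 ≤ m) (n ℓ : ℕ) :
    (F m (m * n) ℓ).card =
      ∑ t ∈ Finset.Nat.antidiagonalTuple m n,
        ∑ s ∈ Finset.Nat.antidiagonalTuple m ℓ, ∏ i, (F m (t i) (s i)).card := by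
  have hrhs : ∑ t ∈ Finset.Nat.antidiagonalTuple m n,
        ∑ s ∈ Finset.Nat.antidiagonalTuple m ℓ, ∏ i, (F m (t i) (s i)).card
      = (((Finset.Nat.antidiagonalTuple m n) ×ˢ (Finset.Nat.antidiagonalTuple m ℓ)).sigma
          (fun ts => Fintype.piFinset fun i => F m (ts.1 i) (ts.2 i))).card := by
    rw [Finset.card_sigma, Finset.sum_product]
    exact Finset.sum_congr rfl fun t _ => Finset.sum_congr rfl fun s _ =>
      (Fintype.card_piFinset _).symm
  rw [hrhs]
  refine Finset.card_bij'
    (fun S _ => ⟨(fun i => ∑ q ∈ split m S i, m ^ q.1, fun i => (split m S i).card),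
      fun i : Fin m => split m S i⟩)
    (fun x _ => glue m x.2) ?_ ?_ ?_ ?_
  · -- forward membership
    intro S hS
    obtain ⟨hv, hw, hc⟩ := (mem_F hm).1 hS
    have hk := no_zero hm hv hw
    rw [Finset.mem_sigma, Finset.mem_product]
    refine ⟨⟨?_, ?_⟩, ?_⟩
    · rw [Finset.Nat.mem_antidiagonalTuple]
      have h1 : ∑ i : Fin m, ∑ q ∈ split m S i, m ^ (q.1 + 1) = m * n := by
        rw [split_weight hm hv hk, hw]
      have h2 : ∑ i : Fin m, (∑ q ∈ split m S (i : ℕ), m ^ q.1) * m = m * n := by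
        rw [← h1]
        exact Finset.sum_congr rfl fun i _ => (pow_succ_sum _).symm
      rw [← Finset.sum_mul] at h2
      have h3 : (∑ i : Fin m, ∑ q ∈ split m S (i : ℕ), m ^ q.1) * m = n * m := by
        rw [Nat.mul_comm n m]
        exact h2
      exact Nat.eq_of_mul_eq_mul_right (show 0 < m from lt_of_lt_of_le Nat.zero_lt_two hm) h3
    · rw [Finset.Nat.mem_antidiagonalTuple]
      rw [split_card hm hv hk, hc]
    · rw [Fintype.mem_piFinset]
      intro i
      exact (mem_F hm).2 ⟨split_valid hm hv hk i, rfl, rfl⟩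
  · -- backward membership
    rintro ⟨⟨t, s⟩, f⟩ hx
    rw [Finset.mem_sigma, Finset.mem_product] at hx
    obtain ⟨⟨ht, hs⟩, hf⟩ := hx
    rw [Finset.Nat.mem_antidiagonalTuple] at ht hs
    rw [Fintype.mem_piFinset] at hf
    have hfQ : ∀ i, Q m (t i) (s i) (f i) := fun i => (mem_F hm).1 (hf i)
    have hfv : ∀ i, ∀ q ∈ f i, 1 ≤ q.2 ∧ q.2 ≤ m ^ q.1 := fun i => (hfQ i).1
    refine (mem_F hm).2 ⟨fun p hp => (glue_valid hm hfv p hp).1, ?_, ?_⟩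
    · rw [glue_weight hm hfv]
      have : ∑ i : Fin m, ∑ q ∈ f i, m ^ (q.1 + 1) = ∑ i : Fin m, (t i) * m := by
        refine Finset.sum_congr rfl fun i _ => ?_
        rw [pow_succ_sum, (hfQ i).2.1]
      rw [this, ← Finset.sum_mul, ht, Nat.mul_comm]
    · rw [glue_card hm hfv]
      rw [Finset.sum_congr rfl fun (i : Fin m) _ => (hfQ i).2.2, hs]
  · -- left inverse
    intro S hS
    obtain ⟨hv, hw, hc⟩ := (mem_F hm).1 hS
    exact glue_split hm hv (no_zero hm hv hw)
  · -- right inverse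
    rintro ⟨⟨t, s⟩, f⟩ hx
    rw [Finset.mem_sigma, Finset.mem_product] at hx
    obtain ⟨⟨ht, hs⟩, hf⟩ := hx
    rw [Fintype.mem_piFinset] at hf
    have hfQ : ∀ i, Q m (t i) (s i) (f i) := fun i => (mem_F hm).1 (hf i)
    have hfv : ∀ i, ∀ q ∈ f i, 1 ≤ q.2 ∧ q.2 ≤ m ^ q.1 := fun i => (hfQ i).1
    have hsg : ∀ i : Fin m, split m (glue m f) (i : ℕ) = f i := split_glue hm hfv
    refine Sigma.ext ?_ (heq_of_eq (funext fun i => hsg i))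
    refine Prod.ext ?_ ?_ <;> funext i <;> simp only
    · rw [hsg i, (hfQ i).2.1]
    · rw [hsg i, (hfQ i).2.2]


end CMSP

/-- Let `m ≥ 2` and let `A n ℓ` be the number of colored `m`-ary strict partitions of
weight `n` with `ℓ` parts, i.e. finite sets `S` of pairs `(k, c)` with `1 ≤ c ≤ m ^ k`,
`∑_{(k,c) ∈ S} m ^ k = n`, and `|S| = ℓ`. Then
`A (m * n) ℓ = ∑_{n₁+⋯+n_m = n} ∑_{ℓ₁+⋯+ℓ_m = ℓ} A n₁ ℓ₁ * ⋯ * A n_m ℓ_m`, and in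
particular the sequence `a_m n = ∑_ℓ A n ℓ` is `m`-convolutive. -/
theorem colored_mary_strict_partitions_m_convolutive (m : ℕ) (hm : 2 ≤ m)
    (A : ℕ → ℕ → ℕ)
    (hA : ∀ n ℓ, A n ℓ = Nat.card {S : Finset (ℕ × ℕ) //
      (∀ p ∈ S, 1 ≤ p.2 ∧ p.2 ≤ m ^ p.1) ∧
      (∑ p ∈ S, m ^ p.1) = n ∧ S.card = ℓ}) :
    (∀ n ℓ, A (m * n) ℓ =
      ∑ t ∈ Finset.Nat.antidiagonalTuple m n,
        ∑ s ∈ Finset.Nat.antidiagonalTuple m ℓ, ∏ i, A (t i) (s i)) ∧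
    (∀ n, (∑ ℓ ∈ Finset.range (m * n + 1), A (m * n) ℓ) =
      ∑ t ∈ Finset.Nat.antidiagonalTuple m n,
        ∏ i, ∑ ℓ ∈ Finset.range (t i + 1), A (t i) ℓ) := by
  have hAF : ∀ n ℓ, A n ℓ = (CMSP.F m n ℓ).card := by
    intro n ℓ
    rw [hA n ℓ]
    exact CMSP.card_F hm n ℓ
  have part1 : ∀ n ℓ, A (m * n) ℓ =
      ∑ t ∈ Finset.Nat.antidiagonalTuple m n,
        ∑ s ∈ Finset.Nat.antidiagonalTuple m ℓ, ∏ i, A (t i) (s i) := by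
    intro n ℓ
    rw [hAF, CMSP.main hm n ℓ]
    exact Finset.sum_congr rfl fun t _ => Finset.sum_congr rfl fun s _ =>
      Finset.prod_congr rfl fun i _ => (hAF _ _).symm
  refine ⟨part1, ?_⟩
  intro n
  have hA0 : ∀ a b, a < b → A a b = 0 := fun a b h => by
    rw [hAF]; exact CMSP.F_vanish hm h
  calc ∑ ℓ ∈ Finset.range (m * n + 1), A (m * n) ℓ
      = ∑ ℓ ∈ Finset.range (m * n + 1), ∑ t ∈ Finset.Nat.antidiagonalTuple m n,
          ∑ s ∈ Finset.Nat.antidiagonalTuple m ℓ, ∏ i, A (t i) (s i) :=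
        Finset.sum_congr rfl fun ℓ _ => part1 n ℓ
    _ = ∑ t ∈ Finset.Nat.antidiagonalTuple m n, ∑ ℓ ∈ Finset.range (m * n + 1),
          ∑ s ∈ Finset.Nat.antidiagonalTuple m ℓ, ∏ i, A (t i) (s i) := Finset.sum_comm
    _ = ∑ t ∈ Finset.Nat.antidiagonalTuple m n, ∏ i, ∑ ℓ ∈ Finset.range (t i + 1), A (t i) ℓ := ?_
  refine Finset.sum_congr rfl fun t ht => ?_
  rw [Finset.Nat.mem_antidiagonalTuple] at ht
  have hti : ∀ i, t i ≤ n := fun i =>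
    ht ▸ Finset.single_le_sum (f := fun i => t i) (fun _ _ => Nat.zero_le _) (Finset.mem_univ i)
  have hnm : n ≤ m * n := Nat.le_mul_of_pos_left n (by omega)
  have hdisj : (↑(Finset.range (m * n + 1)) : Set ℕ).PairwiseDisjoint
      (Finset.Nat.antidiagonalTuple m) := by
    intro a _ b _ hab
    rw [Function.onFun, Finset.disjoint_left]
    intro g hga hgb
    rw [Finset.Nat.mem_antidiagonalTuple] at hga hgb
    exact hab (by omega)
  rw [← Finset.sum_biUnion hdisj, Finset.prod_univ_sum]
  have e1 : ∑ g ∈ (Finset.range (m * n + 1)).biUnion (Finset.Nat.antidiagonalTuple m),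
        ∏ i, A (t i) (g i)
      = ∑ g ∈ Fintype.piFinset (fun _ : Fin m => Finset.range (m * n + 1)),
        ∏ i, A (t i) (g i) := by
    apply Finset.sum_subset
    · intro g hg
      rw [Finset.mem_biUnion] at hg
      obtain ⟨ℓ, hℓ, hgℓ⟩ := hg
      rw [Finset.mem_range] at hℓ
      rw [Finset.Nat.mem_antidiagonalTuple] at hgℓ
      rw [Fintype.mem_piFinset]
      intro i
      rw [Finset.mem_range]
      have : g i ≤ ∑ j, g j :=
        Finset.single_le_sum (f := fun j => g j) (fun _ _ => Nat.zero_le _) (Finset.mem_univ i)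
      omega
    · intro g hgU hg
      have hsum : ¬ (∑ j, g j < m * n + 1) := by
        intro hlt
        exact hg (Finset.mem_biUnion.2 ⟨∑ j, g j, Finset.mem_range.2 hlt,
          Finset.Nat.mem_antidiagonalTuple.2 rfl⟩)
      have : ∃ i, t i < g i := by
        by_contra hco
        push_neg at hco
        have : ∑ j, g j ≤ ∑ j, t j := Finset.sum_le_sum fun j _ => hco j
        omega
      obtain ⟨i, hi⟩ := this
      exact Finset.prod_eq_zero (Finset.mem_univ i) (hA0 _ _ hi)
  have e2 : ∑ g ∈ Fintype.piFinset (fun i => Finset.range (t i + 1)), ∏ i, A (t i) (g i)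
      = ∑ g ∈ Fintype.piFinset (fun _ : Fin m => Finset.range (m * n + 1)),
        ∏ i, A (t i) (g i) := by
    apply Finset.sum_subset
    · intro g hg
      rw [Fintype.mem_piFinset] at hg ⊢
      intro i
      have h1 : g i < t i + 1 := Finset.mem_range.1 (hg i)
      exact Finset.mem_range.2
        (Nat.lt_succ_of_le (le_trans (Nat.lt_succ_iff.1 h1) (le_trans (hti i) hnm)))
    · intro g hgU hg
      rw [Fintype.mem_piFinset] at hg
      push_neg at hg
      obtain ⟨i, hi⟩ := hg
      rw [Finset.mem_range] at hi
      exact Finset.prod_eq_zero (Finset.mem_univ i) (hA0 _ _ (Nat.not_lt.1 hi))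
  rw [e1, ← e2]
end
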